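/- arXiv:2206.12308 — 5 statements merged into one kernel-verified Lean document; each statement's English description precedes it below -/
import Mathlib

section
/- Assume additionally that each cross-section S_i has a small flow boundary, i.e. Φ_{[−η,η]}(∂^Φ(S_i)) is a null set, and that π is a topological extension of (X,Φ) by the suspension flow (Λ_f,Ψ). Then W is a full set and π restricted to π^{−1}(W) is injective; consequently π : (Λ_f,Ψ) → (X,Φ) is a strongly isomorphic symbolic extension. -/
open Set Topology MeasureTheory

/-- A topological flow. -/
structure IsFlow (X : Type*) [TopologicalSpace X] (φ : ℝ → X → X) : Prop where
  cont : Continuous fun p : X × ℝ => φ p.2 p.1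
  map_zero : ∀ x : X, φ 0 x = x
  map_add : ∀ s t : ℝ, ∀ x : X, φ (s + t) x = φ s (φ t x)

variable {X : Type*}

/-- `Φ_L(A) = {Φ_t(x) : t ∈ L, x ∈ A}`. -/
def flowSet (φ : ℝ → X → X) (L : Set ℝ) (A : Set X) : Set X :=
  {y | ∃ t ∈ L, ∃ x ∈ A, φ t x = y}

/-- A cross-section of injectivity time `η > 0`. -/
def IsCrossSection (φ : ℝ → X → X) (η : ℝ) (S : Set X) : Prop :=
  0 < η ∧ Set.InjOn (fun p : X × ℝ => φ p.2 p.1) (S ×ˢ Set.Icc (-η) η)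

/-- The flow interior (taking `γ = η/2`). -/
def flowInterior [TopologicalSpace X] (φ : ℝ → X → X) (η : ℝ) (U : Set X) : Set X :=
  interior (flowSet φ (Set.Icc (-(η / 2)) (η / 2)) U) ∩ U

/-- The flow boundary. -/
def flowBoundary [TopologicalSpace X] (φ : ℝ → X → X) (η : ℝ) (U : Set X) : Set X :=
  closure U \ flowInterior φ η U

/-- `t` is a return-time sequence for `(x, q)`. -/
def IsRetSeq {N : ℕ} (φ : ℝ → X → X) (S : Fin N → Set X) (β α : ℝ)
    (x : X) (q : ℤ → Fin N) (t : ℤ → ℝ) : Prop :=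
  t 0 = 0 ∧ (∀ i : ℤ, β ≤ t (i + 1) - t i ∧ t (i + 1) - t i ≤ α) ∧
    ∀ i : ℤ, φ (t i) x ∈ S (q i)

/-- The set `G ⋊ Σ^ℤ`. -/
def GJoin {N : ℕ} (φ : ℝ → X → X) (S : Fin N → Set X) (β α : ℝ) :
    Set (X × (ℤ → Fin N)) :=
  {p | p.1 ∈ ⋃ i, S i ∧ ∃ t : ℤ → ℝ, IsRetSeq φ S β α p.1 p.2 t}

/-- First positive hitting time of `T` (`r₁` when `T = G`). -/
noncomputable def hitT (φ : ℝ → X → X) (T : Set X) (x : X) : ℝ :=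
  sInf {t : ℝ | 0 < t ∧ φ t x ∈ T}

/-- Last negative hitting time of `T`. -/
noncomputable def hitTNeg (φ : ℝ → X → X) (T : Set X) (x : X) : ℝ :=
  sSup {t : ℝ | t < 0 ∧ φ t x ∈ T}

/-- Forward return times: `r_0 = 0`, `r_{n+1}(x) = r_n(x) + r_1(Φ_{r_n(x)}(x))`. -/
noncomputable def retPos (φ : ℝ → X → X) (G : Set X) : ℕ → X → ℝ
  | 0 => fun _ => 0
  | n + 1 => fun x => retPos φ G n x + hitT φ G (φ (retPos φ G n x) x)

/-- Backward return times, defined analogously with negative hitting times. -/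
noncomputable def retNeg (φ : ℝ → X → X) (G : Set X) : ℕ → X → ℝ
  | 0 => fun _ => 0
  | n + 1 => fun x => retNeg φ G n x + hitTNeg φ G (φ (retNeg φ G n x) x)

/-- The `i`-th return time `r_i(x)`, `i ∈ ℤ`. -/
noncomputable def retZ (φ : ℝ → X → X) (G : Set X) (i : ℤ) (x : X) : ℝ :=
  if 0 ≤ i then retPos φ G i.toNat x else retNeg φ G (-i).toNat x

/-- `Z = ∪ᵢ ∂^Φ(Sᵢ)`. -/
def Zbd [TopologicalSpace X] {N : ℕ} (φ : ℝ → X → X) (S : Fin N → Set X) (η : ℝ) : Set X :=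
  ⋃ i, flowBoundary φ η (S i)

/-- `W = X \ ∪_{r ∈ ℝ} Φ_r(Z)`. -/
def Wset [TopologicalSpace X] {N : ℕ} (φ : ℝ → X → X) (S : Fin N → Set X) (η : ℝ) : Set X :=
  (⋃ r : ℝ, (fun z => φ r z) '' Zbd φ S η)ᶜ

/-- `V = W ∩ G`. -/
def Vset [TopologicalSpace X] {N : ℕ} (φ : ℝ → X → X) (S : Fin N → Set X) (η : ℝ) : Set X :=
  Wset φ S η ∩ ⋃ i, S i

/-- The itinerary map `Q : V → Σ^ℤ`, `Q_i(x) = j` iff `Φ_{r_i(x)}(x) ∈ S_j` (the sets `S_j`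
being pairwise disjoint, such `j` is unique on `V`; junk value otherwise). -/
noncomputable def Qseq {N : ℕ} (φ : ℝ → X → X) (S : Fin N → Set X) (hN : 0 < N)
    (x : X) : ℤ → Fin N := fun i =>
  @dite _ (∃ j : Fin N, φ (retZ φ (⋃ k, S k) i x) x ∈ S j) (Classical.dec _)
    (fun h => h.choose) (fun _ => ⟨0, hN⟩)

/-- `P : Λ → G` sends `q` to the unique `x` with `(x, q) ∈ G ⋊ Σ^ℤ`. -/
noncomputable def Pmap {N : ℕ} [Nonempty X] (φ : ℝ → X → X) (S : Fin N → Set X)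
    (β α : ℝ) (q : ℤ → Fin N) : X :=
  @dite _ (∃ x : X, (x, q) ∈ GJoin φ S β α) (Classical.dec _)
    (fun h => h.choose) (fun _ => Classical.arbitrary X)

/-- The roof function `f(q) = t₁` where `t` is the return-time sequence of `(P(q), q)`. -/
noncomputable def fmap {N : ℕ} [Nonempty X] (φ : ℝ → X → X) (S : Fin N → Set X)
    (β α : ℝ) (q : ℤ → Fin N) : ℝ :=
  @dite _ (∃ t : ℤ → ℝ, IsRetSeq φ S β α (Pmap φ S β α q) q t) (Classical.dec _)
    (fun h => h.choose 1) (fun _ => 0)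

/-- A set is null if it has zero measure for every `Φ`-invariant Borel probability measure. -/
def IsNullSet [MeasurableSpace X] (φ : ℝ → X → X) (A : Set X) : Prop :=
  ∀ μ : Measure X, IsProbabilityMeasure μ →
    (∀ t : ℝ, Measure.map (φ t) μ = μ) → μ A = 0

open Filter
set_option linter.unusedSectionVars false
set_option maxHeartbeats 1000000
section Basic
variable [TopologicalSpace X] {φ : ℝ → X → X}

lemma IsFlow.add' (hφ : IsFlow X φ) (s t : ℝ) (x : X) : φ s (φ t x) = φ (s + t) x :=
  (hφ.map_add s t x).symm

lemma IsFlow.cancel (hφ : IsFlow X φ) (t : ℝ) (x : X) : φ (-t) (φ t x) = x := by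
  rw [hφ.add']; simp [hφ.map_zero]

lemma IsFlow.inj (hφ : IsFlow X φ) (t : ℝ) {a b : X} (h : φ t a = φ t b) : a = b := by
  have := congrArg (φ (-t)) h
  rwa [hφ.cancel, hφ.cancel] at this

lemma IsFlow.cont_x (hφ : IsFlow X φ) (t : ℝ) : Continuous (fun x => φ t x) :=
  hφ.cont.comp (continuous_id.prodMk continuous_const)

lemma IsFlow.tendsto' (hφ : IsFlow X φ) {u : ℕ → X} {v : ℕ → ℝ} {x : X} {t : ℝ}
    (hu : Tendsto u atTop (𝓝 x)) (hv : Tendsto v atTop (𝓝 t)) :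
    Tendsto (fun n => φ (v n) (u n)) atTop (𝓝 (φ t x)) :=
  (hφ.cont.tendsto (x, t)).comp (hu.prodMk_nhds hv)

end Basic
/-- minimal positive element of a separated, relatively dense set -/
lemma exists_min_pos {A : Set ℝ} {β α : ℝ} (hβ : 0 < β)
    (hsep : ∀ s ∈ A, ∀ s' ∈ A, s < s' → β < s' - s)
    (hcov : ∀ s : ℝ, ∃ t ∈ A, s ≤ t ∧ t ≤ s + α) :
    ∃ m ∈ A, 0 < m ∧ m ≤ α ∧ ∀ t ∈ A, 0 < t → m ≤ t := by
  obtain ⟨b, hbA, hb1, hb2⟩ := hcov (β/2)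
  have hb0 : 0 < b := lt_of_lt_of_le (by linarith) hb1
  set F : Set ℝ := A ∩ Ioc 0 b with hF
  have hbF : b ∈ F := ⟨hbA, hb0, le_refl _⟩
  have hinj : InjOn (fun t => ⌊t/β⌋) F := by
    intro s hs s' hs' he
    simp only at he
    by_contra hne
    rcases lt_or_gt_of_ne hne with h | h
    · have hd : β < s' - s := hsep s hs.1 s' hs'.1 h
      have h1 : s/β + 1 ≤ s'/β := by
        rw [div_add' _ _ _ hβ.ne', div_le_div_iff₀ hβ hβ]
        nlinarith
      have := Int.floor_le_floor h1
      rw [Int.floor_add_one] at this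
      omega
    · have hd : β < s - s' := hsep s' hs'.1 s hs.1 h
      have h1 : s'/β + 1 ≤ s/β := by
        rw [div_add' _ _ _ hβ.ne', div_le_div_iff₀ hβ hβ]
        nlinarith
      have := Int.floor_le_floor h1
      rw [Int.floor_add_one] at this
      omega
  have hFfin : F.Finite := by
    have himg : (fun t => ⌊t/β⌋) '' F ⊆ Set.Icc 0 ⌊b/β⌋ := by
      rintro k ⟨t, ⟨htA, ht0, htb⟩, rfl⟩
      constructor
      · exact Int.floor_nonneg.2 (div_nonneg ht0.le hβ.le)
      · exact Int.floor_le_floor (by gcongr)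
    exact Set.Finite.of_finite_image ((Set.finite_Icc _ _).subset himg) hinj
  obtain ⟨m, hmF, hmin⟩ := Set.exists_min_image F id hFfin ⟨b, hbF⟩
  refine ⟨m, hmF.1, hmF.2.1, ?_, ?_⟩
  · -- m ≤ α
    refine le_of_forall_pos_le_add fun ε hε => ?_
    obtain ⟨t, htA, ht1, ht2⟩ := hcov ε
    have ht0 : 0 < t := lt_of_lt_of_le hε ht1
    have : m ≤ t := by
      rcases le_or_gt t b with h | h
      · exact hmin t ⟨htA, ht0, h⟩
      · exact le_trans (hmF.2.2) h.le
    linarith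
  · intro t htA ht0
    rcases le_or_gt t b with h | h
    · exact hmin t ⟨htA, ht0, h⟩
    · exact le_trans (hmF.2.2) h.le

lemma exists_max_neg {A : Set ℝ} {β α : ℝ} (hβ : 0 < β)
    (hsep : ∀ s ∈ A, ∀ s' ∈ A, s < s' → β < s' - s)
    (hcovB : ∀ s : ℝ, ∃ t ∈ A, s - α ≤ t ∧ t ≤ s) :
    ∃ m ∈ A, m < 0 ∧ -α ≤ m ∧ ∀ t ∈ A, t < 0 → t ≤ m := by
  have := exists_min_pos (A := {t | -t ∈ A}) hβ
    (fun s hs s' hs' h => by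
      have := hsep (-s') hs' (-s) hs (by linarith); linarith)
    (fun s => by
      obtain ⟨t, htA, h1, h2⟩ := hcovB (-s)
      exact ⟨-t, by simpa using htA, by linarith, by linarith⟩)
  obtain ⟨m, hmA, hm0, hmα, hmin⟩ := this
  exact ⟨-m, hmA, by linarith, by linarith, fun t htA ht0 => by
    have := hmin (-t) (by simpa using htA) (by linarith); linarith⟩

section Work

variable [MetricSpace X] [CompactSpace X] [Nonempty X]
  {φ : ℝ → X → X} {N : ℕ} {S : Fin N → Set X} {η β α : ℝ}

/-- Bundle of standing hypotheses. -/
structure Std (φ : ℝ → X → X) (S : Fin N → Set X) (η β α : ℝ) : Prop where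
  flow : IsFlow X φ
  closed : ∀ i, IsClosed (S i)
  cs : ∀ i, IsCrossSection φ η (S i)
  hβ : 0 < β
  hβα : β ≤ α
  hαη : α < η
  βdisj : Pairwise (Function.onFun Disjoint fun i => flowSet φ (Set.Icc 0 β) (S i))
  cov₁ : flowSet φ (Set.Icc 0 α) (⋃ i, S i) = Set.univ
  cov₂ : flowSet φ (Set.Icc (-α) 0) (⋃ i, S i) = Set.univ
  sdiam : ∀ i, Metric.diam (S i) ≤ α
  disj : Pairwise (Function.onFun Disjoint S)

variable {hc : Std φ S η β α}

lemma Std.hη (hc : Std (X := X) φ S η β α) : 0 < η :=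
  lt_trans (lt_of_lt_of_le hc.hβ hc.hβα) hc.hαη

lemma Std.hα0 (hc : Std (X := X) φ S η β α) : 0 < α := lt_of_lt_of_le hc.hβ hc.hβα

/-- cross-section rigidity -/
lemma Std.sec_eq (hc : Std (X := X) φ S η β α) {i : Fin N}
    {z : X} {d : ℝ} (hz : z ∈ S i) (hzd : φ d z ∈ S i) (hd : |d| ≤ η) : d = 0 := by
  have hmem1 : (z, d) ∈ (S i) ×ˢ Set.Icc (-η) η := ⟨hz, abs_le.mp hd⟩
  have hmem2 : (φ d z, 0) ∈ (S i) ×ˢ Set.Icc (-η) η := by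
    have h0 : 0 ≤ η := le_trans (abs_nonneg d) hd
    simp only [Set.mem_prod, Set.mem_Icc]
    exact ⟨hzd, by linarith, h0⟩
  have := (hc.cs i).2 hmem1 hmem2 (by simp [hc.flow.map_zero])
  have := congrArg Prod.snd this
  simpa using this

/-- β-separation of visits to G -/
lemma Std.visits_sep (hc : Std (X := X) φ S η β α)
    {v : X} {s s' : ℝ} (hs : φ s v ∈ ⋃ i, S i) (hs' : φ s' v ∈ ⋃ i, S i)
    (h1 : s < s') (h2 : s' - s ≤ β) : False := by
  obtain ⟨i, hi⟩ := mem_iUnion.mp hs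
  obtain ⟨j, hj⟩ := mem_iUnion.mp hs'
  set u := s' - s with hu
  have hu0 : 0 < u := by simp only [hu]; linarith
  have hadd : φ u (φ s v) = φ s' v := by rw [hc.flow.add']; congr 1; simp only [hu]; ring
  by_cases hij : i = j
  · subst hij
    have := hc.sec_eq hi (by rw [hadd]; exact hj)
      (by rw [abs_of_pos hu0]; linarith [hc.hβα, hc.hαη])
    linarith [this ▸ hu0]
  · have m1 : φ s' v ∈ flowSet φ (Set.Icc 0 β) (S i) :=
      ⟨u, ⟨hu0.le, h2⟩, φ s v, hi, hadd⟩
    have m2 : φ s' v ∈ flowSet φ (Set.Icc 0 β) (S j) :=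
      ⟨0, ⟨le_refl 0, hc.hβ.le⟩, φ s' v, hj, hc.flow.map_zero _⟩
    exact Set.disjoint_left.mp (hc.βdisj hij) m1 m2

/-- forward covering: from every time, a visit within `α` forward -/
lemma Std.visits_covF (hc : Std (X := X) φ S η β α)
    (v : X) (s : ℝ) : ∃ t, (s ≤ t ∧ t ≤ s + α) ∧ φ t v ∈ ⋃ i, S i := by
  have : φ s v ∈ flowSet φ (Set.Icc (-α) 0) (⋃ i, S i) := by rw [hc.cov₂]; trivial
  obtain ⟨τ, hτ, g, hg, hgeq⟩ := this
  refine ⟨s - τ, ⟨by linarith [hτ.2], by linarith [hτ.1]⟩, ?_⟩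
  have h2 : φ (-τ) (φ τ g) = g := hc.flow.cancel τ g
  rw [hgeq, hc.flow.add'] at h2
  rw [show s - τ = -τ + s by ring, h2]; exact hg

/-- backward covering -/
lemma Std.visits_covB (hc : Std (X := X) φ S η β α)
    (v : X) (s : ℝ) : ∃ t, (s - α ≤ t ∧ t ≤ s) ∧ φ t v ∈ ⋃ i, S i := by
  have : φ s v ∈ flowSet φ (Set.Icc 0 α) (⋃ i, S i) := by rw [hc.cov₁]; trivial
  obtain ⟨τ, hτ, g, hg, hgeq⟩ := this
  refine ⟨s - τ, ⟨by linarith [hτ.2], by linarith [hτ.1]⟩, ?_⟩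
  have h2 : φ (-τ) (φ τ g) = g := hc.flow.cancel τ g
  rw [hgeq, hc.flow.add'] at h2
  rw [show s - τ = -τ + s by ring, h2]; exact hg

lemma Std.hitT_spec (hc : Std (X := X) φ S η β α) (v : X) :
    φ (hitT φ (⋃ i, S i) v) v ∈ (⋃ i, S i) ∧ 0 < hitT φ (⋃ i, S i) v ∧
      hitT φ (⋃ i, S i) v ≤ α ∧
      ∀ t, 0 < t → φ t v ∈ (⋃ i, S i) → hitT φ (⋃ i, S i) v ≤ t := by
  obtain ⟨m, hmA, hm0, hmα, hmin⟩ := exists_min_pos (A := {t : ℝ | φ t v ∈ ⋃ i, S i}) hc.hβ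
    (fun s hs s' hs' hlt => by
      by_contra hcon
      exact hc.visits_sep hs hs' hlt (by linarith [not_lt.mp hcon]))
    (fun s => by
      obtain ⟨t, ⟨h1, h2⟩, ht⟩ := hc.visits_covF v s
      exact ⟨t, ht, h1, h2⟩)
  have heq : hitT φ (⋃ i, S i) v = m := by
    apply le_antisymm
    · exact csInf_le ⟨0, fun t ht => ht.1.le⟩ ⟨hm0, hmA⟩
    · exact le_csInf ⟨m, hm0, hmA⟩ (fun t ht => hmin t ht.2 ht.1)
  rw [heq]
  exact ⟨hmA, hm0, hmα, fun t h1 h2 => hmin t h2 h1⟩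

lemma Std.hitTNeg_spec (hc : Std (X := X) φ S η β α) (v : X) :
    φ (hitTNeg φ (⋃ i, S i) v) v ∈ (⋃ i, S i) ∧ hitTNeg φ (⋃ i, S i) v < 0 ∧
      -α ≤ hitTNeg φ (⋃ i, S i) v ∧
      ∀ t, t < 0 → φ t v ∈ (⋃ i, S i) → t ≤ hitTNeg φ (⋃ i, S i) v := by
  obtain ⟨m, hmA, hm0, hmα, hmax⟩ := exists_max_neg (A := {t : ℝ | φ t v ∈ ⋃ i, S i}) hc.hβ
    (fun s hs s' hs' hlt => by
      by_contra hcon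
      exact hc.visits_sep hs hs' hlt (by linarith [not_lt.mp hcon]))
    (fun s => by
      obtain ⟨t, ⟨h1, h2⟩, ht⟩ := hc.visits_covB v s
      exact ⟨t, ht, h1, h2⟩)
  have heq : hitTNeg φ (⋃ i, S i) v = m := by
    apply le_antisymm
    · exact csSup_le ⟨m, hm0, hmA⟩ (fun t ht => hmax t ht.2 ht.1)
    · exact le_csSup ⟨0, fun t ht => ht.1.le⟩ ⟨hm0, hmA⟩
  rw [heq]
  exact ⟨hmA, hm0, hmα, fun t h1 h2 => hmax t h2 h1⟩

lemma Std.hitT_gt_beta (hc : Std (X := X) φ S η β α) {v : X} (hv : v ∈ ⋃ i, S i) :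
    β < hitT φ (⋃ i, S i) v := by
  obtain ⟨h1, h2, h3, _⟩ := hc.hitT_spec v
  by_contra hcon
  exact hc.visits_sep (v := v) (s := 0) (s' := hitT φ (⋃ i, S i) v)
    (by rw [hc.flow.map_zero]; exact hv) h1 h2 (by linarith [not_lt.mp hcon])

lemma Std.hitTNeg_lt_beta (hc : Std (X := X) φ S η β α) {v : X} (hv : v ∈ ⋃ i, S i) :
    hitTNeg φ (⋃ i, S i) v < -β := by
  obtain ⟨h1, h2, h3, _⟩ := hc.hitTNeg_spec v
  by_contra hcon
  exact hc.visits_sep (v := v) (s := hitTNeg φ (⋃ i, S i) v) (s' := 0)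
    h1 (by rw [hc.flow.map_zero]; exact hv) h2 (by linarith [not_lt.mp hcon])

lemma retPos_succ_pt (hφ : IsFlow X φ) (G : Set X) (v : X) (n : ℕ) :
    φ (retPos φ G (n+1) v) v
      = φ (hitT φ G (φ (retPos φ G n v) v)) (φ (retPos φ G n v) v) := by
  rw [hφ.add']
  show φ (retPos φ G n v + hitT φ G (φ (retPos φ G n v) v)) v = _
  congr 1
  ring

lemma retNeg_succ_pt (hφ : IsFlow X φ) (G : Set X) (v : X) (n : ℕ) :
    φ (retNeg φ G (n+1) v) v
      = φ (hitTNeg φ G (φ (retNeg φ G n v) v)) (φ (retNeg φ G n v) v) := by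
  rw [hφ.add']
  show φ (retNeg φ G n v + hitTNeg φ G (φ (retNeg φ G n v) v)) v = _
  congr 1
  ring

lemma Std.retPos_mem (hc : Std (X := X) φ S η β α) {v : X} (hv : v ∈ ⋃ i, S i) (n : ℕ) :
    φ (retPos φ (⋃ i, S i) n v) v ∈ ⋃ i, S i := by
  induction n with
  | zero => show φ 0 v ∈ _; rw [hc.flow.map_zero]; exact hv
  | succ n ih =>
      rw [retPos_succ_pt hc.flow]
      exact (hc.hitT_spec _).1

lemma Std.retNeg_mem (hc : Std (X := X) φ S η β α) {v : X} (hv : v ∈ ⋃ i, S i) (n : ℕ) :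
    φ (retNeg φ (⋃ i, S i) n v) v ∈ ⋃ i, S i := by
  induction n with
  | zero => show φ 0 v ∈ _; rw [hc.flow.map_zero]; exact hv
  | succ n ih =>
      rw [retNeg_succ_pt hc.flow]
      exact (hc.hitTNeg_spec _).1


lemma Std.retPos_gap (hc : Std (X := X) φ S η β α) {v : X} (hv : v ∈ ⋃ i, S i) (n : ℕ) :
    β < retPos φ (⋃ i, S i) (n+1) v - retPos φ (⋃ i, S i) n v ∧
      retPos φ (⋃ i, S i) (n+1) v - retPos φ (⋃ i, S i) n v ≤ α := by
  have h : retPos φ (⋃ i, S i) (n+1) v - retPos φ (⋃ i, S i) n v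
      = hitT φ (⋃ i, S i) (φ (retPos φ (⋃ i, S i) n v) v) := by
    show retPos φ (⋃ i, S i) n v + _ - _ = _; ring
  rw [h]
  exact ⟨hc.hitT_gt_beta (hc.retPos_mem hv n), (hc.hitT_spec _).2.2.1⟩

lemma Std.retNeg_gap (hc : Std (X := X) φ S η β α) {v : X} (hv : v ∈ ⋃ i, S i) (n : ℕ) :
    β < retNeg φ (⋃ i, S i) n v - retNeg φ (⋃ i, S i) (n+1) v ∧
      retNeg φ (⋃ i, S i) n v - retNeg φ (⋃ i, S i) (n+1) v ≤ α := by
  have h : retNeg φ (⋃ i, S i) n v - retNeg φ (⋃ i, S i) (n+1) v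
      = -hitTNeg φ (⋃ i, S i) (φ (retNeg φ (⋃ i, S i) n v) v) := by
    show retNeg φ (⋃ i, S i) n v - (retNeg φ (⋃ i, S i) n v + _) = _; ring
  rw [h]
  constructor
  · linarith [hc.hitTNeg_lt_beta (hc.retNeg_mem hv n)]
  · linarith [(hc.hitTNeg_spec (φ (retNeg φ (⋃ i, S i) n v) v)).2.2.1]

lemma retZ_zero (φ : ℝ → X → X) (G : Set X) (v : X) : retZ φ G 0 v = 0 := by
  simp [retZ, retPos]

lemma retZ_ofNat (φ : ℝ → X → X) (G : Set X) (v : X) (n : ℕ) :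
    retZ φ G (n : ℤ) v = retPos φ G n v := by
  simp [retZ]

lemma retZ_negNat (φ : ℝ → X → X) (G : Set X) (v : X) {n : ℕ} (hn : 0 < n) :
    retZ φ G (-(n : ℤ)) v = retNeg φ G n v := by
  have h : ¬ (0 ≤ -(n : ℤ)) := by omega
  simp only [retZ, if_neg h, neg_neg, Int.toNat_natCast]

lemma Std.retZ_gap (hc : Std (X := X) φ S η β α) {v : X} (hv : v ∈ ⋃ i, S i) (i : ℤ) :
    β < retZ φ (⋃ i, S i) (i+1) v - retZ φ (⋃ i, S i) i v ∧
      retZ φ (⋃ i, S i) (i+1) v - retZ φ (⋃ i, S i) i v ≤ α := by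
  rcases le_or_gt 0 i with hi | hi
  · obtain ⟨n, rfl⟩ : ∃ n : ℕ, i = (n : ℤ) := ⟨i.toNat, by omega⟩
    rw [show ((n : ℤ) + 1) = ((n+1 : ℕ) : ℤ) by omega, retZ_ofNat, retZ_ofNat]
    exact hc.retPos_gap hv n
  · obtain ⟨n, rfl⟩ : ∃ n : ℕ, i = -((n+1 : ℕ) : ℤ) := ⟨(-i).toNat - 1, by omega⟩
    rw [retZ_negNat φ _ v (by omega)]
    rcases Nat.eq_zero_or_pos n with rfl | hn
    · rw [show (-((0+1 : ℕ) : ℤ) + 1) = ((0:ℕ) : ℤ) by omega, retZ_ofNat]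
      have := hc.retNeg_gap hv 0
      simpa [retPos, retNeg] using this
    · rw [show (-((n+1 : ℕ) : ℤ) + 1) = -((n : ℕ) : ℤ) by omega, retZ_negNat φ _ v hn]
      exact hc.retNeg_gap hv n

lemma Std.retZ_strictMono (hc : Std (X := X) φ S η β α) {v : X} (hv : v ∈ ⋃ i, S i) :
    StrictMono (fun i => retZ φ (⋃ i, S i) i v) := by
  apply strictMono_int_of_lt_succ
  intro n
  have h := hc.retZ_gap hv n
  show retZ φ (⋃ i, S i) n v < retZ φ (⋃ i, S i) (n+1) v
  linarith [hc.hβ, h.1]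

lemma Std.retZ_mem (hc : Std (X := X) φ S η β α) {v : X} (hv : v ∈ ⋃ i, S i) (i : ℤ) :
    φ (retZ φ (⋃ i, S i) i v) v ∈ ⋃ i, S i := by
  rcases le_or_gt 0 i with hi | hi
  · obtain ⟨n, rfl⟩ : ∃ n : ℕ, i = (n : ℤ) := ⟨i.toNat, by omega⟩
    rw [retZ_ofNat]; exact hc.retPos_mem hv n
  · obtain ⟨n, rfl⟩ : ∃ n : ℕ, i = -((n+1 : ℕ) : ℤ) := ⟨(-i).toNat - 1, by omega⟩
    rw [retZ_negNat φ _ v (by omega)]; exact hc.retNeg_mem hv (n+1)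

/-- difference bounds along retZ -/
lemma Std.retZ_diff (hc : Std (X := X) φ S η β α) {v : X} (hv : v ∈ ⋃ i, S i)
    {i j : ℤ} (hij : i ≤ j) :
    β * (j - i) ≤ retZ φ (⋃ i, S i) j v - retZ φ (⋃ i, S i) i v ∧
      retZ φ (⋃ i, S i) j v - retZ φ (⋃ i, S i) i v ≤ α * (j - i) := by
  have key : ∀ n : ℕ, β * n ≤ retZ φ (⋃ i, S i) (i + n) v - retZ φ (⋃ i, S i) i v ∧
      retZ φ (⋃ i, S i) (i + n) v - retZ φ (⋃ i, S i) i v ≤ α * n := by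
    intro n
    induction n with
    | zero => norm_num
    | succ n ih =>
        have hgap := hc.retZ_gap hv (i + n)
        have he : (i + ((n:ℕ)+1 : ℕ) : ℤ) = (i + n) + 1 := by push_cast; ring
        rw [he]
        push_cast
        constructor
        · nlinarith [ih.1, hgap.1]
        · nlinarith [ih.2, hgap.2]
  obtain ⟨n, rfl⟩ : ∃ n : ℕ, j = i + n := ⟨(j - i).toNat, by omega⟩
  have h := key n
  push_cast at h ⊢
  constructor
  · linarith [h.1]
  · linarith [h.2]

lemma Std.retZ_abs_le (hc : Std (X := X) φ S η β α) {v : X} (hv : v ∈ ⋃ i, S i) (i : ℤ) :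
    |retZ φ (⋃ i, S i) i v| ≤ α * |(i : ℝ)| ∧ β * |(i : ℝ)| ≤ |retZ φ (⋃ i, S i) i v| := by
  rcases le_or_gt 0 i with hi | hi
  · have h := hc.retZ_diff hv (i := 0) (j := i) hi
    rw [retZ_zero] at h
    obtain ⟨h1, h2⟩ := h
    push_cast at h1 h2
    have hi' : (0:ℝ) ≤ (i:ℝ) := by exact_mod_cast hi
    have hβi : 0 ≤ β * (i:ℝ) := mul_nonneg hc.hβ.le hi'
    have hr : 0 ≤ retZ φ (⋃ i, S i) i v := by linarith
    rw [abs_of_nonneg hr, abs_of_nonneg hi']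
    exact ⟨by linarith, by linarith⟩
  · have h := hc.retZ_diff hv (i := i) (j := 0) hi.le
    rw [retZ_zero] at h
    obtain ⟨h1, h2⟩ := h
    push_cast at h1 h2
    have hi' : (i:ℝ) ≤ 0 := by exact_mod_cast hi.le
    have hβi : 0 ≤ β * (-(i:ℝ)) := mul_nonneg hc.hβ.le (by linarith)
    have hr : retZ φ (⋃ i, S i) i v ≤ 0 := by nlinarith
    rw [abs_of_nonpos hr, abs_of_nonpos hi']
    constructor
    · nlinarith
    · nlinarith

/-- no visit strictly between consecutive forward return times -/
lemma Std.retPos_no_mid (hc : Std (X := X) φ S η β α) {v : X} (hv : v ∈ ⋃ i, S i) (n : ℕ)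
    {t : ℝ} (h1 : retPos φ (⋃ i, S i) n v < t) (h2 : t < retPos φ (⋃ i, S i) (n+1) v)
    (ht : φ t v ∈ ⋃ i, S i) : False := by
  set z := φ (retPos φ (⋃ i, S i) n v) v with hz
  have hvisit : φ (t - retPos φ (⋃ i, S i) n v) z ∈ ⋃ i, S i := by
    rw [hz, hc.flow.add', show t - retPos φ (⋃ i, S i) n v + retPos φ (⋃ i, S i) n v = t by ring]
    exact ht
  have hmin := (hc.hitT_spec z).2.2.2 _ (by linarith) hvisit
  have : retPos φ (⋃ i, S i) (n+1) v = retPos φ (⋃ i, S i) n v + hitT φ (⋃ i, S i) z := rfl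
  linarith

lemma Std.retNeg_no_mid (hc : Std (X := X) φ S η β α) {v : X} (hv : v ∈ ⋃ i, S i) (n : ℕ)
    {t : ℝ} (h1 : retNeg φ (⋃ i, S i) (n+1) v < t) (h2 : t < retNeg φ (⋃ i, S i) n v)
    (ht : φ t v ∈ ⋃ i, S i) : False := by
  set z := φ (retNeg φ (⋃ i, S i) n v) v with hz
  have hvisit : φ (t - retNeg φ (⋃ i, S i) n v) z ∈ ⋃ i, S i := by
    rw [hz, hc.flow.add', show t - retNeg φ (⋃ i, S i) n v + retNeg φ (⋃ i, S i) n v = t by ring]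
    exact ht
  have hmax := (hc.hitTNeg_spec z).2.2.2 _ (by linarith) hvisit
  have : retNeg φ (⋃ i, S i) (n+1) v = retNeg φ (⋃ i, S i) n v + hitTNeg φ (⋃ i, S i) z := rfl
  linarith

/-- completeness: every visit time is a return time -/
lemma Std.retZ_complete (hc : Std (X := X) φ S η β α) {v : X} (hv : v ∈ ⋃ i, S i)
    {t : ℝ} (ht : φ t v ∈ ⋃ i, S i) : ∃ i : ℤ, retZ φ (⋃ i, S i) i v = t := by
  rcases lt_trichotomy t 0 with hneg | rfl | hpos
  · -- negative side
    have key : ∀ n : ℕ, ∀ t : ℝ, φ t v ∈ (⋃ i, S i) → retNeg φ (⋃ i, S i) n v ≤ t → t ≤ 0 →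
        ∃ k : ℕ, retNeg φ (⋃ i, S i) k v = t := by
      intro n
      induction n with
      | zero =>
          intro t ht h1 h2
          have h1' : (0:ℝ) ≤ t := h1
          exact ⟨0, show (0:ℝ) = t from le_antisymm h1' h2⟩
      | succ n ih =>
          intro t ht h1 h2
          rcases le_or_gt (retNeg φ (⋃ i, S i) n v) t with h | h
          · exact ih t ht h h2
          · rcases eq_or_lt_of_le h1 with heq | hlt
            · exact ⟨n+1, heq⟩
            · exact absurd (hc.retNeg_no_mid hv n hlt h ht) (by simp)
    have hdown : ∀ n : ℕ, retNeg φ (⋃ i, S i) n v ≤ -(β * n) := by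
      intro n
      induction n with
      | zero => simp [retNeg]
      | succ n ih =>
          have := hc.retNeg_gap hv n
          push_cast
          nlinarith [this.1]
    obtain ⟨n, hn⟩ := exists_nat_ge ((-t) / β)
    have hβ0 := hc.hβ
    have hnt : retNeg φ (⋃ i, S i) n v ≤ t := by
      have : -t ≤ β * n := by
        rw [div_le_iff₀ hβ0] at hn; linarith [hn]
      linarith [hdown n]
    obtain ⟨k, hk⟩ := key n t ht hnt hneg.le
    have hk0 : 0 < k := by
      by_contra h
      have : k = 0 := by omega
      subst this
      simp [retNeg] at hk
      linarith [hk ▸ hneg]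
    exact ⟨-(k : ℤ), by rw [retZ_negNat φ _ v hk0]; exact hk⟩
  · exact ⟨0, retZ_zero φ _ v⟩
  · have key : ∀ n : ℕ, ∀ t : ℝ, φ t v ∈ (⋃ i, S i) → t ≤ retPos φ (⋃ i, S i) n v → 0 ≤ t →
        ∃ k : ℕ, retPos φ (⋃ i, S i) k v = t := by
      intro n
      induction n with
      | zero =>
          intro t ht h1 h2
          exact ⟨0, (le_antisymm h1 h2).symm⟩
      | succ n ih =>
          intro t ht h1 h2
          rcases le_or_gt t (retPos φ (⋃ i, S i) n v) with h | h
          · exact ih t ht h h2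
          · rcases eq_or_lt_of_le h1 with heq | hlt
            · exact ⟨n+1, heq.symm⟩
            · exact absurd (hc.retPos_no_mid hv n h hlt ht) (by simp)
    have hup : ∀ n : ℕ, β * n ≤ retPos φ (⋃ i, S i) n v := by
      intro n
      induction n with
      | zero => simp [retPos]
      | succ n ih =>
          have := hc.retPos_gap hv n
          push_cast
          nlinarith [this.1]
    obtain ⟨n, hn⟩ := exists_nat_ge (t / β)
    have hβ0 := hc.hβ
    have hnt : t ≤ retPos φ (⋃ i, S i) n v := by
      have : t ≤ β * n := by rw [div_le_iff₀ hβ0] at hn; linarith [hn]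
      linarith [hup n]
    obtain ⟨k, hk⟩ := key n t ht hnt hpos.le
    exact ⟨(k : ℤ), by rw [retZ_ofNat]; exact hk⟩

/-- difference bounds along an abstract return-time sequence -/
lemma retseq_diff {x : X} {q : ℤ → Fin N} {T : ℤ → ℝ}
    (hT : IsRetSeq φ S β α x q T) {i j : ℤ} (hij : i ≤ j) :
    β * (j - i) ≤ T j - T i ∧ T j - T i ≤ α * (j - i) := by
  have key : ∀ n : ℕ, β * n ≤ T (i + n) - T i ∧ T (i + n) - T i ≤ α * n := by
    intro n
    induction n with
    | zero => norm_num
    | succ n ih =>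
        have hgap := hT.2.1 (i + n)
        have he : (i + ((n:ℕ)+1 : ℕ) : ℤ) = (i + n) + 1 := by push_cast; ring
        rw [he]
        push_cast
        constructor
        · nlinarith [ih.1, hgap.1]
        · nlinarith [ih.2, hgap.2]
  obtain ⟨n, rfl⟩ : ∃ n : ℕ, j = i + n := ⟨(j - i).toNat, by omega⟩
  have h := key n
  push_cast at h ⊢
  exact ⟨by linarith [h.1], by linarith [h.2]⟩

lemma retseq_strictMono {x : X} {q : ℤ → Fin N} {T : ℤ → ℝ} (hβ : 0 < β)
    (hT : IsRetSeq φ S β α x q T) : StrictMono T := by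
  apply strictMono_int_of_lt_succ
  intro n
  linarith [(hT.2.1 n).1]

lemma retseq_tendsto_top {x : X} {q : ℤ → Fin N} {T : ℤ → ℝ} (hβ : 0 < β)
    (hT : IsRetSeq φ S β α x q T) :
    Tendsto (fun n : ℕ => T (n : ℤ)) atTop atTop := by
  apply tendsto_atTop_mono (f := fun n : ℕ => β * n)
  · intro n
    have h := (retseq_diff hT (i := 0) (j := (n : ℤ)) (by positivity)).1
    rw [hT.1] at h
    push_cast at h
    linarith
  · exact Tendsto.const_mul_atTop hβ tendsto_natCast_atTop_atTop

lemma retseq_tendsto_bot {x : X} {q : ℤ → Fin N} {T : ℤ → ℝ} (hβ : 0 < β)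
    (hT : IsRetSeq φ S β α x q T) :
    Tendsto (fun n : ℕ => T (-(n : ℤ))) atTop atBot := by
  apply tendsto_atBot_mono (f := fun n : ℕ => -(β * n))
  · intro n
    have h := (retseq_diff hT (i := -(n : ℤ)) (j := 0) (by omega)).1
    rw [hT.1] at h
    push_cast at h
    linarith
  · have h : Tendsto (fun n : ℕ => β * (n:ℝ)) atTop atTop :=
      Tendsto.const_mul_atTop hβ tendsto_natCast_atTop_atTop
    exact tendsto_neg_atBot_iff.mpr h

/-- uniqueness of the return-time sequence for a given pair `(x, q)` -/
lemma Std.retseq_unique (hc : Std (X := X) φ S η β α) {x : X} {q : ℤ → Fin N} {T U : ℤ → ℝ}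
    (hT : IsRetSeq φ S β α x q T) (hU : IsRetSeq φ S β α x q U) : T = U := by
  have hstep : ∀ i : ℤ, T i = U i → T (i+1) = U (i+1) := by
    intro i he
    have h1 := hT.2.1 i
    have h2 := hU.2.1 i
    have hd : |U (i+1) - T (i+1)| ≤ η := by
      rw [abs_le]
      constructor
      · linarith [hc.hβ, hc.hαη]
      · linarith [hc.hβ, hc.hαη]
    have hz : φ (T (i+1)) x ∈ S (q (i+1)) := hT.2.2 (i+1)
    have hz' : φ (U (i+1) - T (i+1)) (φ (T (i+1)) x) ∈ S (q (i+1)) := by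
      rw [hc.flow.add', show U (i+1) - T (i+1) + T (i+1) = U (i+1) by ring]
      exact hU.2.2 (i+1)
    have := hc.sec_eq hz hz' hd
    linarith
  have hstep' : ∀ i : ℤ, T (i+1) = U (i+1) → T i = U i := by
    intro i he
    have h1 := hT.2.1 i
    have h2 := hU.2.1 i
    have hd : |U i - T i| ≤ η := by
      rw [abs_le]
      constructor
      · linarith [hc.hβ, hc.hαη]
      · linarith [hc.hβ, hc.hαη]
    have hz : φ (T i) x ∈ S (q i) := hT.2.2 i
    have hz' : φ (U i - T i) (φ (T i) x) ∈ S (q i) := by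
      rw [hc.flow.add', show U i - T i + T i = U i by ring]
      exact hU.2.2 i
    have := hc.sec_eq hz hz' hd
    linarith
  funext i
  induction i using Int.induction_on with
  | zero => rw [hT.1, hU.1]
  | succ n ih => exact hstep n ih
  | pred n ih => exact hstep' (-(n:ℤ) - 1) (by rw [show (-(n:ℤ) - 1 + 1) = -(n:ℤ) by ring]; exact ih)

/-- basic spec of `Qseq` -/
lemma Std.Qseq_spec (hc : Std (X := X) φ S η β α) (hN : 0 < N) {v : X} (hv : v ∈ ⋃ i, S i)
    (i : ℤ) : φ (retZ φ (⋃ k, S k) i v) v ∈ S (Qseq φ S hN v i) := by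
  have hex : ∃ j : Fin N, φ (retZ φ (⋃ k, S k) i v) v ∈ S j := mem_iUnion.mp (hc.retZ_mem hv i)
  have heq : Qseq φ S hN v i = hex.choose := by
    unfold Qseq
    rw [dif_pos hex]
  rw [heq]
  exact hex.choose_spec

lemma Std.retZ_isRetSeq (hc : Std (X := X) φ S η β α) (hN : 0 < N) {v : X} (hv : v ∈ ⋃ i, S i) :
    IsRetSeq φ S β α v (Qseq φ S hN v) (fun i => retZ φ (⋃ k, S k) i v) := by
  refine ⟨retZ_zero φ _ v, fun i => ?_, fun i => hc.Qseq_spec hN hv i⟩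
  have := hc.retZ_gap hv i
  exact ⟨le_of_lt this.1, this.2⟩

/-- W is flow-invariant -/
lemma Std.Wset_shift (hc : Std (X := X) φ S η β α) {x : X} (hx : x ∈ Wset φ S η) (c : ℝ) :
    φ c x ∈ Wset φ S η := by
  intro hmem
  apply hx
  obtain ⟨B, ⟨r, rfl⟩, hB⟩ := hmem
  obtain ⟨z, hz, hzeq⟩ := hB
  refine mem_iUnion.mpr ⟨r - c, ⟨z, hz, ?_⟩⟩
  have := congrArg (φ (-c)) hzeq
  rw [hc.flow.cancel] at this
  rw [← this, hc.flow.add']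
  congr 1
  ring

/-- points of W on a section are in the flow interior -/
lemma Std.mem_flowInterior_of_W (hc : Std (X := X) φ S η β α) {y : X} {i : Fin N}
    (hy : y ∈ Wset φ S η) (hyS : y ∈ S i) :
    y ∈ interior (flowSet φ (Set.Icc (-(η/2)) (η/2)) (S i)) := by
  have hnotbd : y ∉ flowBoundary φ η (S i) := by
    intro hbd
    apply hy
    refine mem_iUnion.mpr ⟨0, ⟨y, mem_iUnion.mpr ⟨i, hbd⟩, hc.flow.map_zero y⟩⟩
  have hycl : y ∈ closure (S i) := subset_closure hyS
  by_contra hint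
  exact hnotbd ⟨hycl, fun hfi => hint hfi.1⟩

/-- Completeness: every visit of the base point to `G` is recorded by any
return-time sequence attached to a symbol sequence in `Λ`. -/
lemma Std.visits_complete (hc : Std (X := X) φ S η β α) (hN : 0 < N)
    (hα : ∀ (t u : ℤ → ℝ) (x y : X), t 0 = 0 → u 0 = 0 →
      (∀ i : ℤ, 0 < t (i + 1) - t i ∧ t (i + 1) - t i ≤ α) →
      (∀ i : ℤ, |u (i + 1) - u i| ≤ α) →
      Filter.Tendsto (fun n : ℕ => t (n : ℤ)) Filter.atTop Filter.atTop →
      Filter.Tendsto (fun n : ℕ => t (-(n : ℤ))) Filter.atTop Filter.atBot →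
      (∀ i : ℤ, dist (φ (t i) x) (φ (u i) y) ≤ α) →
      ∃ s : ℝ, |s| ≤ η ∧ y = φ s x)
    {q : ℤ → Fin N} (hq : q ∈ closure (Qseq φ S hN '' Vset φ S η))
    {x₀ : X} {T : ℤ → ℝ} (hT : IsRetSeq φ S β α x₀ q T)
    (hW : ∀ c : ℝ, φ c x₀ ∈ Wset φ S η)
    {r : ℝ} (hr : φ r x₀ ∈ ⋃ i, S i) : ∃ m : ℤ, T m = r := by
  obtain ⟨p, hp, hplim⟩ := mem_closure_iff_seq_limit.mp hq
  choose v hvV hvQ using hp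
  have hvG : ∀ n, v n ∈ ⋃ i, S i := fun n => (hvV n).2
  have hplim' : Tendsto (fun n => Qseq φ S hN (v n)) atTop (𝓝 q) :=
    (Filter.tendsto_congr (fun n => (hvQ n))).mpr hplim
  have hsymb : ∀ i : ℤ, ∀ᶠ n in atTop, Qseq φ S hN (v n) i = q i := by
    intro i
    have h2 : Tendsto (fun n => Qseq φ S hN (v n) i) atTop (𝓝 (q i)) :=
      tendsto_pi_nhds.mp hplim' i
    have hopen : IsOpen ({q i} : Set (Fin N)) := isOpen_discrete _
    have := h2.eventually_mem (hopen.mem_nhds rfl)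
    simpa using this
  -- compactness extraction
  set w : ℕ → X × (ℤ → ℝ) := fun n => (v n, fun i => retZ φ (⋃ k, S k) i (v n)) with hw
  have hK : IsCompact ((univ : Set X) ×ˢ
      (univ.pi fun i : ℤ => Set.Icc (-(α * |(i:ℝ)|)) (α * |(i:ℝ)|))) :=
    isCompact_univ.prod (isCompact_univ_pi fun i => isCompact_Icc)
  have hwK : ∀ n, w n ∈ (univ : Set X) ×ˢ
      (univ.pi fun i : ℤ => Set.Icc (-(α * |(i:ℝ)|)) (α * |(i:ℝ)|)) := by
    intro n
    refine ⟨mem_univ _, fun i _ => ?_⟩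
    have h := (hc.retZ_abs_le (hvG n) i).1
    have h2 := abs_le.mp h
    exact ⟨h2.1, h2.2⟩
  obtain ⟨⟨x1, u⟩, -, ψ, hψ, hwlim⟩ := hK.tendsto_subseq hwK
  have hvx : Tendsto (fun n => v (ψ n)) atTop (𝓝 x1) :=
    (continuous_fst.tendsto _).comp hwlim
  have hu : ∀ i : ℤ, Tendsto (fun n => retZ φ (⋃ k, S k) i (v (ψ n))) atTop (𝓝 (u i)) :=
    fun i => ((continuous_apply i).tendsto _).comp ((continuous_snd.tendsto _).comp hwlim)
  have hψtop : Tendsto ψ atTop atTop := hψ.tendsto_atTop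
  -- the limit is a return-time sequence for (x1, q)
  have hretseq : IsRetSeq φ S β α x1 q u := by
    refine ⟨?_, fun i => ?_, fun i => ?_⟩
    · have h0 : Tendsto (fun _ : ℕ => (0:ℝ)) atTop (𝓝 (u 0)) := by
        have := hu 0
        simpa [retZ_zero] using this
      exact tendsto_nhds_unique h0 tendsto_const_nhds
    · have hmem : ∀ n, retZ φ (⋃ k, S k) (i+1) (v (ψ n)) - retZ φ (⋃ k, S k) i (v (ψ n))
          ∈ Set.Icc β α := by
        intro n
        have h := hc.retZ_gap (hvG (ψ n)) i
        exact ⟨h.1.le, h.2⟩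
      have hlim := (hu (i+1)).sub (hu i)
      have hclmem := isClosed_Icc.mem_of_tendsto hlim (Eventually.of_forall hmem)
      exact ⟨hclmem.1, hclmem.2⟩
    · have hlim : Tendsto (fun n => φ (retZ φ (⋃ k, S k) i (v (ψ n))) (v (ψ n))) atTop
          (𝓝 (φ (u i) x1)) := hc.flow.tendsto' hvx (hu i)
      have hev : ∀ᶠ n in atTop, φ (retZ φ (⋃ k, S k) i (v (ψ n))) (v (ψ n)) ∈ S (q i) := by
        filter_upwards [hψtop.eventually (hsymb i)] with n hn
        have := hc.Qseq_spec hN (hvG (ψ n)) i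
        rwa [hn] at this
      exact (hc.closed (q i)).mem_of_tendsto hlim hev
  -- identify the limit point with x₀
  have hdist : ∀ i : ℤ, dist (φ (T i) x₀) (φ (u i) x1) ≤ α := by
    intro i
    exact le_trans
      (Metric.dist_le_diam_of_mem (hc.closed (q i)).isCompact.isBounded
        (hT.2.2 i) (hretseq.2.2 i))
      (hc.sdiam (q i))
  obtain ⟨s, hsη, hs⟩ := hα T u x₀ x1 hT.1 hretseq.1
    (fun i => ⟨by linarith [(hT.2.1 i).1, hc.hβ], (hT.2.1 i).2⟩)
    (fun i => by
      rw [abs_le]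
      exact ⟨by linarith [(hretseq.2.1 i).1, hc.hβ, hc.hα0], (hretseq.2.1 i).2⟩)
    (retseq_tendsto_top hc.hβ hT) (retseq_tendsto_bot hc.hβ hT) hdist
  have hx0S : x₀ ∈ S (q 0) := by
    have := hT.2.2 0; rwa [hT.1, hc.flow.map_zero] at this
  have hx1S : φ s x₀ ∈ S (q 0) := by
    have := hretseq.2.2 0; rwa [hretseq.1, hc.flow.map_zero, hs] at this
  have hs0 : s = 0 := hc.sec_eq hx0S hx1S hsη
  have hx1 : x1 = x₀ := by rw [hs, hs0, hc.flow.map_zero]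
  rw [hx1] at hvx hretseq
  have hTu : u = T := hc.retseq_unique hretseq hT
  -- the visit point lies in the flow interior
  obtain ⟨j, hyj⟩ := mem_iUnion.mp hr
  have hyO := hc.mem_flowInterior_of_W (hW r) hyj
  have hOtend : Tendsto (fun n => φ r (v (ψ n))) atTop (𝓝 (φ r x₀)) :=
    hc.flow.tendsto' hvx tendsto_const_nhds
  have hev : ∀ᶠ n in atTop, φ r (v (ψ n)) ∈
      interior (flowSet φ (Set.Icc (-(η/2)) (η/2)) (S j)) :=
    hOtend.eventually_mem (isOpen_interior.mem_nhds hyO)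
  set C : ℝ := |r| + η/2 with hC
  set K : ℤ := ⌈C / β⌉ with hK2
  have hkey : ∀ᶠ n in atTop, ∃ k ∈ Finset.Icc (-K) K,
      (retZ φ (⋃ k, S k) k (v (ψ n)) ∈ Set.Icc (r - η/2) (r + η/2) ∧
       φ (retZ φ (⋃ k, S k) k (v (ψ n))) (v (ψ n)) ∈ S j) := by
    filter_upwards [hev] with n hn
    obtain ⟨ρ, hρ, z, hz, hzeq⟩ := interior_subset hn
    have hvis : φ (r - ρ) (v (ψ n)) = z := by
      have h2 := congrArg (φ (-ρ)) hzeq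
      rw [hc.flow.cancel] at h2
      rw [h2, hc.flow.add']
      congr 1
      ring
    have hvisG : φ (r - ρ) (v (ψ n)) ∈ ⋃ k, S k := by
      rw [hvis]; exact mem_iUnion.mpr ⟨j, hz⟩
    obtain ⟨k, hk⟩ := hc.retZ_complete (hvG (ψ n)) hvisG
    have hρ1 : -(η/2) ≤ ρ := hρ.1
    have hρ2 : ρ ≤ η/2 := hρ.2
    refine ⟨k, ?_, ?_, ?_⟩
    · have habs := (hc.retZ_abs_le (hvG (ψ n)) k).2
      rw [hk] at habs
      have h1 : |r - ρ| ≤ C := by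
        rw [hC, abs_le]
        constructor
        · linarith [neg_abs_le r]
        · linarith [le_abs_self r]
      have h2 : |(k:ℝ)| ≤ C / β := by
        rw [le_div_iff₀ hc.hβ]
        calc |(k:ℝ)| * β = β * |(k:ℝ)| := by ring
        _ ≤ |r - ρ| := habs
        _ ≤ C := h1
      have h3 : ((|k| : ℤ) : ℝ) ≤ (K : ℝ) := by
        rw [Int.cast_abs]
        exact h2.trans (Int.le_ceil _)
      have h4 : |k| ≤ K := by exact_mod_cast h3
      obtain ⟨h5, h6⟩ := abs_le.mp h4
      exact Finset.mem_Icc.mpr ⟨h5, h6⟩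
    · rw [hk, Set.mem_Icc]
      exact ⟨by linarith, by linarith⟩
    · rw [hk, hvis]; exact hz
  have hfreq : ∃ k₀ ∈ Finset.Icc (-K) K, ∃ᶠ n in atTop,
      (retZ φ (⋃ k, S k) k₀ (v (ψ n)) ∈ Set.Icc (r - η/2) (r + η/2) ∧
       φ (retZ φ (⋃ k, S k) k₀ (v (ψ n))) (v (ψ n)) ∈ S j) := by
    by_contra hcon
    push_neg at hcon
    have hev2 : ∀ᶠ n in atTop, ∀ k ∈ Finset.Icc (-K) K,
        ¬ (retZ φ (⋃ k, S k) k (v (ψ n)) ∈ Set.Icc (r - η/2) (r + η/2) ∧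
           φ (retZ φ (⋃ k, S k) k (v (ψ n))) (v (ψ n)) ∈ S j) := by
      rw [Filter.eventually_all_finset]
      intro k hkm
      have := hcon k hkm
      exact this.mono fun n hn h => hn h.1 h.2
    obtain ⟨n, hn1, hn2⟩ := (hkey.and hev2).exists
    obtain ⟨k, hkmem, hkprop⟩ := hn1
    exact hn2 k hkmem hkprop
  obtain ⟨k₀, hk₀mem, hk₀freq⟩ := hfreq
  obtain ⟨θ, hθ, hθP⟩ := extraction_of_frequently_atTop hk₀freq
  have hlim1 : Tendsto (fun m => retZ φ (⋃ k, S k) k₀ (v (ψ (θ m)))) atTop (𝓝 (u k₀)) :=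
    (hu k₀).comp hθ.tendsto_atTop
  have hIcc : u k₀ ∈ Set.Icc (r - η/2) (r + η/2) :=
    isClosed_Icc.mem_of_tendsto hlim1 (Eventually.of_forall fun m => (hθP m).1)
  have hlim2 : Tendsto (fun m => φ (retZ φ (⋃ k, S k) k₀ (v (ψ (θ m)))) (v (ψ (θ m)))) atTop
      (𝓝 (φ (u k₀) x₀)) :=
    hc.flow.tendsto' (hvx.comp hθ.tendsto_atTop) hlim1
  have hSk : φ (u k₀) x₀ ∈ S j :=
    (hc.closed j).mem_of_tendsto hlim2 (Eventually.of_forall fun m => (hθP m).2)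
  have hd : |r - u k₀| ≤ η := by
    have hIcc1 := hIcc.1
    have hIcc2 := hIcc.2
    rw [abs_le]
    constructor
    · linarith [hc.hη]
    · linarith [hc.hη]
  have hyr : φ (r - u k₀) (φ (u k₀) x₀) ∈ S j := by
    rw [hc.flow.add', show r - u k₀ + u k₀ = r by ring]
    exact hyj
  have hfin := hc.sec_eq hSk hyr hd
  refine ⟨k₀, ?_⟩
  have := congrFun hTu k₀
  linarith [this]

lemma flowSet_eq_image (φ : ℝ → X → X) (L : Set ℝ) (A : Set X) :
    flowSet φ L A = (fun p : X × ℝ => φ p.2 p.1) '' (A ×ˢ L) := by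
  ext y
  constructor
  · rintro ⟨t, ht, x, hx, rfl⟩
    exact ⟨(x, t), ⟨hx, ht⟩, rfl⟩
  · rintro ⟨⟨x, t⟩, ⟨hx, ht⟩, rfl⟩
    exact ⟨t, ht, x, hx, rfl⟩

lemma Std.flowBoundary_isClosed (hc : Std (X := X) φ S η β α) (i : Fin N) :
    IsClosed (flowBoundary φ η (S i)) := by
  have h : flowBoundary φ η (S i)
      = (S i) \ interior (flowSet φ (Set.Icc (-(η/2)) (η/2)) (S i)) := by
    unfold flowBoundary flowInterior
    rw [(hc.closed i).closure_eq, Set.diff_inter_self_eq_diff]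
  rw [h]
  exact (hc.closed i).sdiff isOpen_interior

section Meas

variable [MeasurableSpace X] [BorelSpace X]

lemma Std.Wc_null (hc : Std (X := X) φ S η β α)
    (hsmall : ∀ i, IsNullSet φ (flowSet φ (Set.Icc (-η) η) (flowBoundary φ η (S i)))) :
    IsNullSet φ (Wset φ S η)ᶜ := by
  intro μ hprob hinv
  set B : Fin N → Set X := fun i => flowSet φ (Set.Icc (-η) η) (flowBoundary φ η (S i)) with hB
  have hBcpt : ∀ i, IsCompact (B i) := by
    intro i
    rw [hB]
    simp only
    rw [flowSet_eq_image]
    exact (((hc.flowBoundary_isClosed i).isCompact).prod isCompact_Icc).image hc.flow.cont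
  have hBmeas : ∀ i, MeasurableSet (B i) := fun i => (hBcpt i).isClosed.measurableSet
  have himg : ∀ (c : ℝ) (i : Fin N), (fun z => φ c z) '' B i = (φ (-c)) ⁻¹' (B i) := by
    intro c i
    ext y
    constructor
    · rintro ⟨b, hb, rfl⟩
      show φ (-c) (φ c b) ∈ B i
      rw [hc.flow.cancel]; exact hb
    · intro hy
      exact ⟨φ (-c) y, hy, by
        have := hc.flow.cancel (-c) y
        rwa [neg_neg] at this⟩
  have hnull : ∀ (c : ℝ) (i : Fin N), μ ((fun z => φ c z) '' B i) = 0 := by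
    intro c i
    rw [himg c i]
    have hmap : μ ((φ (-c)) ⁻¹' (B i)) = (Measure.map (φ (-c)) μ) (B i) :=
      (Measure.map_apply (hc.flow.cont_x (-c)).measurable (hBmeas i)).symm
    rw [hmap, hinv (-c)]
    exact hsmall i μ hprob hinv
  have hsub : (Wset φ S η)ᶜ ⊆ ⋃ (n : ℤ), ⋃ (i : Fin N), (fun z => φ ((n : ℝ) * η) z) '' B i := by
    intro x hx
    rw [Wset, compl_compl] at hx
    obtain ⟨A, ⟨r, rfl⟩, z, hz, rfl⟩ := hx
    obtain ⟨i, hzi⟩ := mem_iUnion.mp hz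
    have hη := hc.hη
    set n : ℤ := ⌊r / η⌋ with hn
    have h1 : (n : ℝ) ≤ r / η := Int.floor_le _
    have h2 : r / η < n + 1 := Int.lt_floor_add_one _
    have hs1 : 0 ≤ r - n * η := by
      have := mul_le_mul_of_nonneg_right h1 hη.le
      rw [div_mul_cancel₀ r hη.ne'] at this
      linarith
    have hs2 : r - n * η ≤ η := by
      have := mul_lt_mul_of_pos_right h2 hη
      rw [div_mul_cancel₀ r hη.ne'] at this
      nlinarith
    refine mem_iUnion.mpr ⟨n, mem_iUnion.mpr ⟨i, ⟨φ (r - n * η) z, ?_, ?_⟩⟩⟩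
    · exact ⟨r - n * η, ⟨by linarith, hs2⟩, z, hzi, rfl⟩
    · show φ ((n:ℝ) * η) (φ (r - n * η) z) = φ r z
      rw [hc.flow.add']
      congr 1
      ring
  refine measure_mono_null hsub ?_
  refine measure_iUnion_null fun n => measure_iUnion_null fun i => hnull _ i

end Meas

end Work

/-- Assume moreover that each cross-section `Sᵢ` has a small flow boundary and that
`π(q,t) = Φ_t(P(q))` is a topological extension (i.e. surjective) of `(X,Φ)` by the
suspension flow `(Λ_f, Ψ)` over `Λ = closure(Q(V))` with roof `f`. Then `W` is a full set,
`π` restricted to `π⁻¹(W)` is injective (points of the suspension being represented by pairs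
`(q,t)`, `q ∈ Λ`, `0 ≤ t < f(q)`), and consequently `π` is a strongly isomorphic symbolic
extension. -/
theorem strongly_isomorphic_of_small_flow_boundaries
    {X : Type*} [MetricSpace X] [CompactSpace X] [Nonempty X]
    [MeasurableSpace X] [BorelSpace X]
    (φ : ℝ → X → X) (hφ : IsFlow X φ)
    {N : ℕ} (hN : 0 < N) (S : Fin N → Set X) (η β α : ℝ)
    (hclosed : ∀ i, IsClosed (S i))
    (hdisj : Pairwise (Function.onFun Disjoint S))
    (hcs : ∀ i, IsCrossSection φ η (S i))
    (hβ : 0 < β) (hβα : β ≤ α) (hαη : α < η)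
    (hdiam : ∀ i, Metric.diam (S i) ≤ α)
    (hα : ∀ (t u : ℤ → ℝ) (x y : X), t 0 = 0 → u 0 = 0 →
      (∀ i : ℤ, 0 < t (i + 1) - t i ∧ t (i + 1) - t i ≤ α) →
      (∀ i : ℤ, |u (i + 1) - u i| ≤ α) →
      Filter.Tendsto (fun n : ℕ => t (n : ℤ)) Filter.atTop Filter.atTop →
      Filter.Tendsto (fun n : ℕ => t (-(n : ℤ))) Filter.atTop Filter.atBot →
      (∀ i : ℤ, dist (φ (t i) x) (φ (u i) y) ≤ α) →
      ∃ s : ℝ, |s| ≤ η ∧ y = φ s x)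
    (hcov₁ : flowSet φ (Set.Icc 0 α) (⋃ i, S i) = Set.univ)
    (hcov₂ : flowSet φ (Set.Icc (-α) 0) (⋃ i, S i) = Set.univ)
    (hβdisj : Pairwise (Function.onFun Disjoint fun i => flowSet φ (Set.Icc 0 β) (S i)))
    (hsmall : ∀ i, IsNullSet φ (flowSet φ (Set.Icc (-η) η) (flowBoundary φ η (S i))))
    (hsurj : ∀ x : X, ∃ q ∈ closure (Qseq φ S hN '' Vset φ S η), ∃ t : ℝ,
      0 ≤ t ∧ t ≤ fmap φ S β α q ∧ φ t (Pmap φ S β α q) = x) :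
    IsNullSet φ (Wset φ S η)ᶜ ∧
    (∀ q₁ ∈ closure (Qseq φ S hN '' Vset φ S η),
      ∀ q₂ ∈ closure (Qseq φ S hN '' Vset φ S η), ∀ t₁ t₂ : ℝ,
        0 ≤ t₁ → t₁ < fmap φ S β α q₁ → 0 ≤ t₂ → t₂ < fmap φ S β α q₂ →
        φ t₁ (Pmap φ S β α q₁) ∈ Wset φ S η →
        φ t₁ (Pmap φ S β α q₁) = φ t₂ (Pmap φ S β α q₂) → q₁ = q₂ ∧ t₁ = t₂) ∧
    (∃ E : Set X, IsNullSet φ Eᶜ ∧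
      ∀ q₁ ∈ closure (Qseq φ S hN '' Vset φ S η),
        ∀ q₂ ∈ closure (Qseq φ S hN '' Vset φ S η), ∀ t₁ t₂ : ℝ,
          0 ≤ t₁ → t₁ < fmap φ S β α q₁ → 0 ≤ t₂ → t₂ < fmap φ S β α q₂ →
          φ t₁ (Pmap φ S β α q₁) ∈ E →
          φ t₁ (Pmap φ S β α q₁) = φ t₂ (Pmap φ S β α q₂) → q₁ = q₂ ∧ t₁ = t₂) := by

  classical
  have hc : Std φ S η β α :=
    ⟨hφ, hclosed, hcs, hβ, hβα, hαη, hβdisj, hcov₁, hcov₂, hdiam, hdisj⟩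
  have part1 : IsNullSet φ (Wset φ S η)ᶜ := hc.Wc_null hsmall
  have part2 : ∀ q₁ ∈ closure (Qseq φ S hN '' Vset φ S η),
      ∀ q₂ ∈ closure (Qseq φ S hN '' Vset φ S η), ∀ t₁ t₂ : ℝ,
        0 ≤ t₁ → t₁ < fmap φ S β α q₁ → 0 ≤ t₂ → t₂ < fmap φ S β α q₂ →
        φ t₁ (Pmap φ S β α q₁) ∈ Wset φ S η →
        φ t₁ (Pmap φ S β α q₁) = φ t₂ (Pmap φ S β α q₂) → q₁ = q₂ ∧ t₁ = t₂ := by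
    intro q₁ hq₁ q₂ hq₂ t₁ t₂ ht₁0 ht₁f ht₂0 ht₂f hxW hxeq
    set x₁ := Pmap φ S β α q₁ with hx₁def
    set x₂ := Pmap φ S β α q₂ with hx₂def
    -- extract the chosen return-time sequences
    have hf₁ : ∃ t : ℤ → ℝ, IsRetSeq φ S β α x₁ q₁ t := by
      by_contra hno
      rw [hx₁def] at hno
      unfold fmap at ht₁f
      rw [dif_neg hno] at ht₁f
      linarith
    have hf₂ : ∃ t : ℤ → ℝ, IsRetSeq φ S β α x₂ q₂ t := by
      by_contra hno
      rw [hx₂def] at hno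
      unfold fmap at ht₂f
      rw [dif_neg hno] at ht₂f
      linarith
    have hT₁ : IsRetSeq φ S β α x₁ q₁ hf₁.choose := hf₁.choose_spec
    have hT₂ : IsRetSeq φ S β α x₂ q₂ hf₂.choose := hf₂.choose_spec
    set T₁ := hf₁.choose
    set T₂ := hf₂.choose
    have hfeq₁ : fmap φ S β α q₁ = T₁ 1 := by
      unfold fmap
      rw [dif_pos (hx₁def ▸ hf₁)]
    have hfeq₂ : fmap φ S β α q₂ = T₂ 1 := by
      unfold fmap
      rw [dif_pos (hx₂def ▸ hf₂)]
    rw [hfeq₁] at ht₁f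
    rw [hfeq₂] at ht₂f
    have hmono₁ : StrictMono T₁ := retseq_strictMono hβ hT₁
    have hmono₂ : StrictMono T₂ := retseq_strictMono hβ hT₂
    -- the orbit lies in W
    have hWall₁ : ∀ c : ℝ, φ c x₁ ∈ Wset φ S η := by
      intro c
      have := hc.Wset_shift hxW (c - t₁)
      rwa [hc.flow.add', show c - t₁ + t₁ = c by ring] at this
    have hx₂eq : φ (t₁ - t₂) x₁ = x₂ := by
      have h2 := congrArg (φ (-t₂)) hxeq
      rw [hc.flow.cancel] at h2
      rw [← h2, hc.flow.add']
      congr 1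
      ring
    have hWall₂ : ∀ c : ℝ, φ c x₂ ∈ Wset φ S η := by
      intro c
      rw [← hx₂eq, hc.flow.add']
      exact hWall₁ _
    -- completeness of both sequences
    have hcomp₁ : ∀ r : ℝ, φ r x₁ ∈ (⋃ i, S i) → ∃ m : ℤ, T₁ m = r :=
      fun r hr => hc.visits_complete hN hα hq₁ hT₁ hWall₁ hr
    have hcomp₂ : ∀ r : ℝ, φ r x₂ ∈ (⋃ i, S i) → ∃ m : ℤ, T₂ m = r :=
      fun r hr => hc.visits_complete hN hα hq₂ hT₂ hWall₂ hr
    have hx₂S : x₂ ∈ S (q₂ 0) := by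
      have := hT₂.2.2 0
      rwa [hT₂.1, hc.flow.map_zero] at this
    have hx₁S : x₁ ∈ S (q₁ 0) := by
      have := hT₁.2.2 0
      rwa [hT₁.1, hc.flow.map_zero] at this
    -- t₁ - t₂ is a visit time of x₁
    obtain ⟨c, hceq⟩ := hcomp₁ (t₁ - t₂) (by rw [hx₂eq]; exact mem_iUnion.mpr ⟨q₂ 0, hx₂S⟩)
    have ht12 : t₁ = t₂ := by
      rcases lt_trichotomy c 0 with hcneg | hczero | hcpos
      · -- c ≤ -1 leads to contradiction
        exfalso
        have hc1 : c + 1 ≤ 0 := by omega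
        have hT₁c1 : T₁ (c+1) ≤ 0 := by
          rcases eq_or_lt_of_le hc1 with heq | hlt
          · rw [heq, hT₁.1]
          · calc T₁ (c+1) ≤ T₁ 0 := (hmono₁.le_iff_le).mpr hc1
            _ = 0 := hT₁.1
        set u := T₁ (c+1) - T₁ c with hudef
        have hu0 : 0 < u := by
          have := (hT₁.2.1 c).1
          rw [hudef]
          linarith
        have hvisu : φ u x₂ ∈ (⋃ i, S i) := by
          rw [← hx₂eq, hc.flow.add', ← hceq,
            show u + T₁ c = T₁ (c+1) by rw [hudef]; ring]
          exact mem_iUnion.mpr ⟨q₁ (c+1), hT₁.2.2 (c+1)⟩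
        obtain ⟨m, hm⟩ := hcomp₂ u hvisu
        have hm1 : 1 ≤ m := by
          by_contra hmn
          have hm0 : m ≤ 0 := by omega
          have : T₂ m ≤ 0 := by
            rcases eq_or_lt_of_le hm0 with heq | hlt
            · rw [heq, hT₂.1]
            · calc T₂ m ≤ T₂ 0 := (hmono₂.le_iff_le).mpr hm0
              _ = 0 := hT₂.1
          linarith [hm ▸ this]
        have hT₂1u : T₂ 1 ≤ u := by
          calc T₂ 1 ≤ T₂ m := (hmono₂.le_iff_le).mpr hm1
          _ = u := hm
        -- t₂ < T₂ 1 ≤ u = T₁(c+1) - (t₁ - t₂)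
        have : t₁ < T₁ (c+1) := by
          rw [hudef] at hT₂1u
          rw [hceq] at hT₂1u
          linarith
        linarith
      · rw [hczero] at hceq
        rw [hT₁.1] at hceq
        linarith
      · exfalso
        have : T₁ 1 ≤ T₁ c := (hmono₁.le_iff_le).mpr (by omega)
        have h2 : T₁ c = t₁ - t₂ := hceq
        linarith
    have hx12 : x₂ = x₁ := by
      rw [← hx₂eq, ht12, sub_self, hc.flow.map_zero]
    -- T₁ = T₂
    rw [hx12] at hT₂ hcomp₂
    have hTeq : ∀ i : ℤ, T₁ i = T₂ i := by
      have hstep : ∀ i : ℤ, T₁ i = T₂ i → T₁ (i+1) = T₂ (i+1) := by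
        intro i hi
        obtain ⟨m, hm⟩ := hcomp₂ (T₁ (i+1)) (mem_iUnion.mpr ⟨q₁ (i+1), hT₁.2.2 (i+1)⟩)
        obtain ⟨m', hm'⟩ := hcomp₁ (T₂ (i+1)) (mem_iUnion.mpr ⟨q₂ (i+1), hT₂.2.2 (i+1)⟩)
        have h1 : T₂ i < T₂ m := by rw [hm, ← hi]; exact hmono₁ (by omega)
        have h2 : i < m := hmono₂.lt_iff_lt.mp h1
        have h3 : T₂ (i+1) ≤ T₂ m := (hmono₂.le_iff_le).mpr (by omega)
        have h4 : T₁ i < T₁ m' := by rw [hm', hi]; exact hmono₂ (by omega)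
        have h5 : i < m' := hmono₁.lt_iff_lt.mp h4
        have h6 : T₁ (i+1) ≤ T₁ m' := (hmono₁.le_iff_le).mpr (by omega)
        rw [hm] at h3
        rw [hm'] at h6
        linarith
      have hstep' : ∀ i : ℤ, T₁ (i+1) = T₂ (i+1) → T₁ i = T₂ i := by
        intro i hi
        obtain ⟨m, hm⟩ := hcomp₂ (T₁ i) (mem_iUnion.mpr ⟨q₁ i, hT₁.2.2 i⟩)
        obtain ⟨m', hm'⟩ := hcomp₁ (T₂ i) (mem_iUnion.mpr ⟨q₂ i, hT₂.2.2 i⟩)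
        have h1 : T₂ m < T₂ (i+1) := by rw [hm, ← hi]; exact hmono₁ (by omega)
        have h2 : m < i+1 := hmono₂.lt_iff_lt.mp h1
        have h3 : T₂ m ≤ T₂ i := (hmono₂.le_iff_le).mpr (by omega)
        have h4 : T₁ m' < T₁ (i+1) := by rw [hm', hi]; exact hmono₂ (by omega)
        have h5 : m' < i+1 := hmono₁.lt_iff_lt.mp h4
        have h6 : T₁ m' ≤ T₁ i := (hmono₁.le_iff_le).mpr (by omega)
        rw [hm] at h3
        rw [hm'] at h6
        linarith
      intro i
      induction i using Int.induction_on with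
      | zero => rw [hT₁.1, hT₂.1]
      | succ n ih => exact hstep n ih
      | pred n ih =>
          refine hstep' (-(n:ℤ) - 1) ?_
          rw [show (-(n:ℤ) - 1 + 1) = -(n:ℤ) by ring]
          exact ih
    -- q₁ = q₂
    have hq12 : q₁ = q₂ := by
      funext i
      by_contra hne
      have hm1 : φ (T₁ i) x₁ ∈ S (q₁ i) := hT₁.2.2 i
      have hm2 : φ (T₁ i) x₁ ∈ S (q₂ i) := by
        rw [hTeq i]
        exact hT₂.2.2 i
      exact Set.disjoint_left.mp (hdisj hne) hm1 hm2
    exact ⟨hq12, ht12⟩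
  exact ⟨part1, part2, ⟨Wset φ S η, part1, part2⟩⟩
end

section
/- Let (X,Φ) be an expansive topological flow without fixed points. Then there exist a finite set A, a subshift Λ ⊂ A^ℤ with shift σ, and a continuous function f : Λ → (0,∞) such that (X,Φ) is a topological factor of the suspension flow (Λ_f,Ψ) of σ under f: there is a continuous surjection π : Λ_f → X with π∘Ψ_t = Φ_t∘π for all t ∈ ℝ. -/
open Set Topology

variable {X : Type*}

/-- A fixed point of the flow. -/
def IsFixedPoint (φ : ℝ → X → X) (x : X) : Prop := ∀ t : ℝ, φ t x = x

/-- Expansiveness for flows (Bowen–Walters). -/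
def IsExpansive [MetricSpace X] (φ : ℝ → X → X) : Prop :=
  ∀ ε : ℝ, 0 < ε → ∃ δ : ℝ, 0 < δ ∧ ∀ (x y : X) (s : ℝ → ℝ), Continuous s → s 0 = 0 →
    (∀ t : ℝ, dist (φ t x) (φ (s t) y) < δ) → ∃ t : ℝ, |t| < ε ∧ y = φ t x

namespace BW

variable {X : Type*} [MetricSpace X] {φ : ℝ → X → X}

lemma flow_cont_apply (hφ : IsFlow X φ) (t : ℝ) : Continuous (φ t) :=
  hφ.cont.comp (continuous_id.prodMk continuous_const)

lemma flow_cont_orbit (hφ : IsFlow X φ) (x : X) : Continuous fun t : ℝ => φ t x :=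
  hφ.cont.comp (continuous_const.prodMk continuous_id)

lemma flow_add_apply (hφ : IsFlow X φ) (s t : ℝ) (x : X) : φ s (φ t x) = φ (s + t) x :=
  (hφ.map_add s t x).symm

lemma flow_cancel (hφ : IsFlow X φ) (t : ℝ) (x : X) : φ (-t) (φ t x) = x := by
  rw [flow_add_apply hφ, neg_add_cancel, hφ.map_zero]

/-- master uniform continuity lemma -/
lemma flow_uc [CompactSpace X] (hφ : IsFlow X φ) (C δ : ℝ) (hδ : 0 < δ) :
    ∃ γ > 0, ∀ (x y : X) (s u : ℝ), |s| ≤ C → |u| ≤ C → dist x y ≤ γ → |s - u| ≤ γ →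
      dist (φ s x) (φ u y) < δ := by
  have hK : IsCompact (univ ×ˢ Icc (-C) C : Set (X × ℝ)) :=
    isCompact_univ.prod isCompact_Icc
  have hc : UniformContinuousOn (fun p : X × ℝ => φ p.2 p.1) (univ ×ˢ Icc (-C) C) :=
    hK.uniformContinuousOn_of_continuous hφ.cont.continuousOn
  rw [Metric.uniformContinuousOn_iff] at hc
  obtain ⟨d, hd, hprop⟩ := hc δ hδ
  refine ⟨d / 2, by linarith, fun x y s u hs hu hxy hsu => ?_⟩
  have hsC : s ∈ Icc (-C) C := abs_le.mp hs
  have huC : u ∈ Icc (-C) C := abs_le.mp hu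
  have := hprop (x, s) ⟨mem_univ _, hsC⟩ (y, u) ⟨mem_univ _, huC⟩ ?_
  · exact this
  · rw [Prod.dist_eq]
    have : dist s u = |s - u| := Real.dist_eq s u
    apply max_lt <;> [skip; rw [this]] <;> linarith

noncomputable def Vfn (φ : ℝ → X → X) (z : X) (τ : ℝ) (y : X) : ℝ :=
  ∫ s in (0:ℝ)..τ, dist (φ s y) z

lemma vfn_integrand_cont (hφ : IsFlow X φ) (z y : X) :
    Continuous fun s : ℝ => dist (φ s y) z :=
  (flow_cont_orbit hφ y).dist continuous_const

lemma vfn_dist_le (hφ : IsFlow X φ) (z : X) {τ : ℝ} (h0 : 0 ≤ τ) (y y' : X) {B : ℝ}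
    (hB : ∀ s ∈ Icc (0:ℝ) τ, dist (φ s y) (φ s y') ≤ B) :
    |Vfn φ z τ y - Vfn φ z τ y'| ≤ τ * B := by
  have i1 := (vfn_integrand_cont hφ z y).intervalIntegrable (μ := MeasureTheory.volume) 0 τ
  have i2 := (vfn_integrand_cont hφ z y').intervalIntegrable (μ := MeasureTheory.volume) 0 τ
  rw [Vfn, Vfn, ← intervalIntegral.integral_sub i1 i2]
  have := intervalIntegral.norm_integral_le_of_norm_le_const
    (C := B) (f := fun s => dist (φ s y) z - dist (φ s y') z) (a := 0) (b := τ) ?_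
  · rw [Real.norm_eq_abs] at this
    calc |∫ s in (0:ℝ)..τ, (dist (φ s y) z - dist (φ s y') z)| ≤ B * |τ - 0| := this
    _ = τ * B := by rw [sub_zero, abs_of_nonneg h0, mul_comm]
  · intro s hs
    rw [Set.uIoc_of_le h0] at hs
    have hs' : s ∈ Icc (0:ℝ) τ := ⟨le_of_lt hs.1, hs.2⟩
    rw [Real.norm_eq_abs]
    exact le_trans (abs_dist_sub_le _ _ _) (hB s hs')

lemma vfn_flow (hφ : IsFlow X φ) (z : X) (τ t : ℝ) (y : X) :
    Vfn φ z τ (φ t y) = ∫ s in t..(t + τ), dist (φ s y) z := by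
  rw [Vfn]
  have : (fun s : ℝ => dist (φ s (φ t y)) z) = fun s => dist (φ (s + t) y) z := by
    funext s; rw [flow_add_apply hφ]
  rw [this, intervalIntegral.integral_comp_add_right (fun s => dist (φ s y) z) t,
    zero_add, add_comm]

lemma vfn_mono (hφ : IsFlow X φ) {z : X} {τ ρ R : ℝ} {y : X} {a b : ℝ}
    (hder : ∀ u : X, dist u z ≤ R → dist u z + ρ ≤ dist (φ τ u) z)
    (hab : a ≤ b) (hseg : ∀ s ∈ Icc a b, dist (φ s y) z ≤ R) :
    Vfn φ z τ (φ a y) + ρ * (b - a) ≤ Vfn φ z τ (φ b y) := by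
  have hcont := vfn_integrand_cont hφ z y
  have hint : ∀ (c d : ℝ), IntervalIntegrable (fun s => dist (φ s y) z)
      MeasureTheory.volume c d := fun c d => hcont.intervalIntegrable c d
  have hcont2 : Continuous fun s : ℝ => dist (φ (s + τ) y) z :=
    hcont.comp (continuous_id.add continuous_const)
  have e1 : Vfn φ z τ (φ a y) = ∫ s in a..(a+τ), dist (φ s y) z := vfn_flow hφ z τ a y
  have e2 : Vfn φ z τ (φ b y) = ∫ s in b..(b+τ), dist (φ s y) z := vfn_flow hφ z τ b y
  have e3 : ∫ s in a..b, dist (φ (s + τ) y) z = ∫ s in (a+τ)..(b+τ), dist (φ s y) z :=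
    intervalIntegral.integral_comp_add_right (a := a) (b := b) (fun s => dist (φ s y) z) τ
  have e4 : (∫ s in a..b, dist (φ s y) z) + ∫ s in b..(b+τ), dist (φ s y) z
      = ∫ s in a..(b+τ), dist (φ s y) z :=
    intervalIntegral.integral_add_adjacent_intervals (hint a b) (hint b (b+τ))
  have e5 : (∫ s in a..(a+τ), dist (φ s y) z) + ∫ s in (a+τ)..(b+τ), dist (φ s y) z
      = ∫ s in a..(b+τ), dist (φ s y) z :=
    intervalIntegral.integral_add_adjacent_intervals (hint a (a+τ)) (hint (a+τ) (b+τ))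
  have key : (∫ s in a..b, (dist (φ (s + τ) y) z - dist (φ s y) z))
      = Vfn φ z τ (φ b y) - Vfn φ z τ (φ a y) := by
    rw [intervalIntegral.integral_sub (hcont2.intervalIntegrable a b) (hint a b), e3, e1, e2]
    linarith
  have hmono : (∫ s in a..b, (ρ:ℝ)) ≤ ∫ s in a..b, (dist (φ (s + τ) y) z - dist (φ s y) z) := by
    apply intervalIntegral.integral_mono_on hab (intervalIntegrable_const)
      ((hcont2.sub hcont).intervalIntegrable a b)
    intro s hs
    have h1 := hder (φ s y) (hseg s hs)
    rw [flow_add_apply hφ τ s y] at h1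
    rw [add_comm τ s] at h1
    simp only [Pi.sub_apply]
    linarith
  rw [intervalIntegral.integral_const, smul_eq_mul] at hmono
  have : (b - a) * ρ ≤ Vfn φ z τ (φ b y) - Vfn φ z τ (φ a y) := by rw [← key]; linarith
  linarith [this, mul_comm ρ (b - a)]

lemma vfn_cont [CompactSpace X] (hφ : IsFlow X φ) (z : X) {τ : ℝ} (h0 : 0 ≤ τ) :
    Continuous (Vfn φ z τ) := by
  rw [Metric.continuous_iff]
  intro y ε hε
  obtain ⟨g, hgpos, hg⟩ := flow_uc hφ (τ+1) (ε/(2*(τ+1))) (by positivity)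
  refine ⟨g, hgpos, fun y' hy' => ?_⟩
  have hB : ∀ s ∈ Icc (0:ℝ) τ, dist (φ s y') (φ s y) ≤ ε/(2*(τ+1)) := by
    intro s hs
    have h1 : |s| ≤ τ + 1 := by rw [abs_of_nonneg hs.1]; linarith [hs.2]
    exact (hg y' y s s h1 h1 hy'.le (by simpa using hgpos.le)).le
  have h2 := vfn_dist_le hφ z h0 y' y hB
  rw [Real.dist_eq]
  have hτ1 : 0 < τ + 1 := by linarith
  calc |Vfn φ z τ y' - Vfn φ z τ y| ≤ τ * (ε/(2*(τ+1))) := h2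
  _ < ε := by
      rw [mul_div_assoc']
      rw [div_lt_iff₀ (by linarith : (0:ℝ) < 2*(τ+1))]
      nlinarith


namespace BWAux2

variable {β : ℝ} {t : ℤ → ℝ}

lemma grid_lb (hβ : 0 < β) (hg : ∀ n : ℤ, β ≤ t (n+1) - t n) :
    ∀ m n : ℤ, m ≤ n → t m + β * ((n : ℝ) - (m : ℝ)) ≤ t n := by
  intro m
  refine Int.le_induction (by simp) ?_
  intro n hmn ih
  have h := hg n
  push_cast
  rw [show β * ((n:ℝ) + 1 - (m:ℝ)) = β * ((n:ℝ) - (m:ℝ)) + β from by ring]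
  push_cast at ih
  linarith

lemma grid_mono (hβ : 0 < β) (hg : ∀ n : ℤ, β ≤ t (n+1) - t n) :
    ∀ m n : ℤ, m ≤ n → t m ≤ t n := by
  intro m n hmn
  have := grid_lb hβ hg m n hmn
  have h2 : (0:ℝ) ≤ β * ((n : ℝ) - (m : ℝ)) := by
    apply mul_nonneg hβ.le
    have : (m:ℝ) ≤ (n:ℝ) := by exact_mod_cast hmn
    linarith
  linarith

lemma grid_idx (hβ : 0 < β) (h0 : t 0 = 0) (hg : ∀ n : ℤ, β ≤ t (n+1) - t n) (u : ℝ) :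
    ∃ n : ℤ, t n ≤ u ∧ u < t (n+1) ∧ ∀ m : ℤ, t m ≤ u → m ≤ n := by
  have hbdd : ∃ b : ℤ, ∀ z : ℤ, t z ≤ u → z ≤ b := by
    refine ⟨max 0 ⌈u / β⌉, fun z hz => ?_⟩
    rcases le_or_gt z 0 with h | h
    · exact le_trans h (le_max_left _ _)
    · have h1 := grid_lb hβ hg 0 z h.le
      rw [h0] at h1
      have h2 : β * (z:ℝ) ≤ u := by push_cast at h1 ⊢; linarith
      have h3 : (z:ℝ) ≤ u / β := (le_div_iff₀ hβ).mpr (by linarith [h2])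
      have h4 : (z:ℝ) ≤ (⌈u / β⌉ : ℝ) := le_trans h3 (Int.le_ceil _)
      have h5 : z ≤ ⌈u / β⌉ := by exact_mod_cast h4
      exact le_trans h5 (le_max_right _ _)
  have hne : ∃ z : ℤ, t z ≤ u := by
    refine ⟨min 0 ⌊u / β⌋, ?_⟩
    have hle0 : min 0 ⌊u / β⌋ ≤ 0 := min_le_left _ _
    have h1 := grid_lb hβ hg (min 0 ⌊u / β⌋) 0 hle0
    rw [h0] at h1
    have h2 : t (min 0 ⌊u / β⌋) ≤ β * ((min 0 ⌊u / β⌋ : ℤ) : ℝ) := by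
      have := h1; push_cast at this ⊢; nlinarith [this]
    have h3 : ((min 0 ⌊u / β⌋ : ℤ) : ℝ) ≤ u / β := by
      have hf : ((⌊u / β⌋ : ℤ) : ℝ) ≤ u / β := Int.floor_le _
      have : ((min 0 ⌊u / β⌋ : ℤ) : ℝ) ≤ ((⌊u / β⌋ : ℤ) : ℝ) := by
        exact_mod_cast min_le_right 0 ⌊u / β⌋
      linarith
    have h4 : β * ((min 0 ⌊u / β⌋ : ℤ) : ℝ) ≤ u := by
      rw [mul_comm]
      exact (le_div_iff₀ hβ).mp h3
    exact le_trans h2 h4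
  obtain ⟨n, hn, hmax⟩ := Int.exists_greatest_of_bdd hbdd hne
  refine ⟨n, hn, ?_, hmax⟩
  by_contra h
  push_neg at h
  have := hmax (n+1) h
  omega

end BWAux2

namespace BWAux2

lemma exists_interp (hβ : 0 < β) {t t' : ℤ → ℝ}
    (h0 : t 0 = 0) (h0' : t' 0 = 0)
    (hg : ∀ n : ℤ, β ≤ t (n+1) - t n) (hg' : ∀ n : ℤ, β ≤ t' (n+1) - t' n) :
    ∃ s : ℝ → ℝ, Continuous s ∧ s 0 = 0 ∧
      ∀ u : ℝ, ∃ n : ℤ, t n ≤ u ∧ u ≤ t (n+1) ∧ 0 ≤ s u - t' n ∧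
        s u - t' n ≤ t' (n+1) - t' n ∧
        |(s u - t' n) - (u - t n)| ≤ |(t' (n+1) - t' n) - (t (n+1) - t n)| := by
  choose idx hidx1 hidx2 hidx3 using grid_idx hβ h0 hg
  have hΔpos : ∀ n : ℤ, 0 < t (n+1) - t n := fun n => lt_of_lt_of_le hβ (hg n)
  have hΔpos' : ∀ n : ℤ, 0 < t' (n+1) - t' n := fun n => lt_of_lt_of_le hβ (hg' n)
  obtain ⟨s, hs⟩ : ∃ s : ℝ → ℝ, s = fun u =>
      t' (idx u) + (u - t (idx u)) * (t' (idx u + 1) - t' (idx u)) / (t (idx u + 1) - t (idx u)) :=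
    ⟨_, rfl⟩
  have idx_eq : ∀ (u : ℝ) (n : ℤ), t n ≤ u → u < t (n+1) → idx u = n := by
    intro u n hn hn'
    refine le_antisymm ?_ (hidx3 u n hn)
    by_contra h
    push_neg at h
    have h1 : t (n+1) ≤ t (idx u) := grid_mono hβ hg _ _ h
    exact absurd (le_trans h1 (hidx1 u)) (not_le.mpr hn')
  -- piece bounds
  have piece : ∀ u : ℝ, 0 ≤ s u - t' (idx u) ∧
      s u - t' (idx u) ≤ t' (idx u + 1) - t' (idx u) ∧
      |(s u - t' (idx u)) - (u - t (idx u))| ≤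
        |(t' (idx u + 1) - t' (idx u)) - (t (idx u + 1) - t (idx u))| := by
    intro u
    set n := idx u
    have ha0 : 0 ≤ u - t n := sub_nonneg.mpr (hidx1 u)
    have ha1 : u - t n ≤ t (n+1) - t n := by linarith [le_of_lt (hidx2 u)]
    have hΔ := hΔpos n
    have hΔ' := hΔpos' n
    have hval : s u - t' n = (u - t n) * (t' (n+1) - t' n) / (t (n+1) - t n) := by
      simp only [hs, n]; ring
    refine ⟨?_, ?_, ?_⟩
    · rw [hval]; positivity
    · rw [hval, div_le_iff₀ hΔ]
      nlinarith
    · have heq : (s u - t' n) - (u - t n)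
          = ((u - t n) / (t (n+1) - t n)) * ((t' (n+1) - t' n) - (t (n+1) - t n)) := by
        rw [hval]; field_simp
      rw [heq, abs_mul]
      have hr : |(u - t n) / (t (n+1) - t n)| ≤ 1 := by
        rw [abs_of_nonneg (by positivity), div_le_one hΔ]; exact ha1
      nlinarith [abs_nonneg ((t' (n+1) - t' n) - (t (n+1) - t n)), hr]
  have hsm : StrictMono s := by
    intro u v huv
    have hnm : idx u ≤ idx v := hidx3 v (idx u) (le_trans (hidx1 u) huv.le)
    rcases eq_or_lt_of_le hnm with h | h
    · have hΔ := hΔpos (idx u)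
      have hΔ' := hΔpos' (idx u)
      have : s v - s u = (v - u) * (t' (idx u + 1) - t' (idx u)) / (t (idx u + 1) - t (idx u)) := by
        simp only [hs, ← h]
        field_simp
        ring
      have hpos : 0 < (v - u) * (t' (idx u + 1) - t' (idx u)) / (t (idx u + 1) - t (idx u)) :=
        div_pos (mul_pos (by linarith) hΔ') hΔ
      linarith
    · have h1 : s u < t' (idx u + 1) := by
        have hΔ := hΔpos (idx u)
        have hΔ' := hΔpos' (idx u)
        have hlt : u - t (idx u) < t (idx u + 1) - t (idx u) := by linarith [hidx2 u]
        have : s u - t' (idx u) < t' (idx u + 1) - t' (idx u) := by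
          have hval : s u - t' (idx u)
              = (u - t (idx u)) * (t' (idx u + 1) - t' (idx u)) / (t (idx u + 1) - t (idx u)) := by
            simp [hs]
          rw [hval, div_lt_iff₀ hΔ]
          nlinarith [sub_nonneg.mpr (hidx1 u)]
        linarith
      have h2 : t' (idx u + 1) ≤ t' (idx v) := grid_mono hβ hg' _ _ h
      have h3 : t' (idx v) ≤ s v := by linarith [(piece v).1]
      linarith
  have hsurj : Function.Surjective s := by
    intro w
    obtain ⟨m, hm1, hm2, _⟩ := grid_idx hβ h0' hg' w
    have hΔ := hΔpos m
    have hΔ' := hΔpos' m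
    obtain ⟨u, hu⟩ : ∃ u : ℝ, u = t m + (w - t' m) * (t (m+1) - t m) / (t' (m+1) - t' m) :=
      ⟨_, rfl⟩
    have hu1 : t m ≤ u := by
      have h9 : 0 ≤ (w - t' m) * (t (m+1) - t m) / (t' (m+1) - t' m) :=
        div_nonneg (mul_nonneg (by linarith) hΔ.le) hΔ'.le
      linarith [hu.le, hu.ge]
    have hu2 : u < t (m+1) := by
      have h9 : (w - t' m) * (t (m+1) - t m) / (t' (m+1) - t' m) < t (m+1) - t m := by
        rw [div_lt_iff₀ hΔ']
        nlinarith
      linarith [hu.le, hu.ge]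
    refine ⟨u, ?_⟩
    have hidxu : idx u = m := idx_eq u m hu1 hu2
    have h8 : u - t m = (w - t' m) * (t (m+1) - t m) / (t' (m+1) - t' m) := by rw [hu]; ring
    simp only [hs, hidxu, h8]
    field_simp
    ring
  have hcont : Continuous s := by
    have := (hsm.orderIsoOfSurjective s hsurj).continuous
    exact this
  have hs0 : s 0 = 0 := by
    have hidx0 : idx 0 = 0 := by
      apply idx_eq 0 0 (le_of_eq h0)
      have h7 := hg 0
      rw [h0] at h7
      linarith
    simp only [hs, hidx0, h0, h0']
    simp
  refine ⟨s, hcont, hs0, fun u => ⟨idx u, hidx1 u, (hidx2 u).le, (piece u).1, (piece u).2.1,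
    (piece u).2.2⟩⟩

end BWAux2

namespace BWAux2
variable {β : ℝ} {t : ℤ → ℝ}
lemma grid_ub (hβ : 0 < β) (hg : ∀ n : ℤ, t (n+1) - t n ≤ 3*β) :
    ∀ m n : ℤ, m ≤ n → t n ≤ t m + 3*β * ((n : ℝ) - (m : ℝ)) := by
  intro m
  refine Int.le_induction (by simp) ?_
  intro n hmn ih
  have h := hg n
  push_cast
  rw [show 3*β * ((n:ℝ) + 1 - (m:ℝ)) = 3*β * ((n:ℝ) - (m:ℝ)) + 3*β from by ring]
  push_cast at ih
  linarith
end BWAux2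

namespace BWAux3
open BWAux2

def Wit {X : Type*} (φ : ℝ → X → X) {N : ℕ} (β : ℝ) (K : Fin N → Set X)
    (q : ℤ → Fin N) (x : X) (t : ℤ → ℝ) : Prop :=
  t 0 = 0 ∧ (∀ n : ℤ, β ≤ t (n+1) - t n ∧ t (n+1) - t n ≤ 3*β) ∧
    ∀ n : ℤ, φ (t n) x ∈ K (q n)

variable {X : Type*} [MetricSpace X] {φ : ℝ → X → X} {N : ℕ} {K : Fin N → Set X}
  {q : ℤ → Fin N} {x : X}

lemma wit_shift (hφ : IsFlow X φ) (h : Wit φ β K q x t) :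
    Wit φ β K (fun n => q (n+1)) (φ (t 1) x) (fun n => t (n+1) - t 1) := by
  obtain ⟨h0, hg, hh⟩ := h
  refine ⟨by simp, fun n => ?_, fun n => ?_⟩
  · have h5 := hg (n+1)
    simp only []
    exact ⟨by linarith [h5.1], by linarith [h5.2]⟩
  · have e : φ (t (n+1) - t 1) (φ (t 1) x) = φ (t (n+1)) x := by
      rw [← hφ.map_add, sub_add_cancel]
    simp only []
    rw [e]
    exact hh (n+1)

lemma wit_unshift (hφ : IsFlow X φ) {x' : X} {t' : ℤ → ℝ}
    (h : Wit φ β K (fun n => q (n+1)) x' t') :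
    Wit φ β K q (φ (t' (-1)) x') (fun n => t' (n-1) - t' (-1)) := by
  obtain ⟨h0, hg, hh⟩ := h
  refine ⟨by norm_num, fun n => ?_, fun n => ?_⟩
  · have h5 := hg (n-1)
    have e : n - 1 + 1 = n := by ring
    rw [e] at h5
    have e2 : n + 1 - 1 = n := by ring
    simp only [e2]
    exact ⟨by linarith [h5.1], by linarith [h5.2]⟩
  · have e1 : φ (t' (n-1) - t' (-1)) (φ (t' (-1)) x') = φ (t' (n-1)) x' := by
      rw [← hφ.map_add]
      norm_num
    simp only []
    rw [e1]
    have h6 := hh (n-1)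
    simpa using h6

lemma wit_bounds (hβ : 0 < β) {t : ℤ → ℝ} (h0 : t 0 = 0)
    (hg : ∀ n : ℤ, β ≤ t (n+1) - t n ∧ t (n+1) - t n ≤ 3*β) (n : ℤ) :
    |t n| ≤ 3*β * |(n:ℝ)| := by
  rcases le_or_gt 0 n with h | h
  · have h1 := grid_lb hβ (fun m => (hg m).1) 0 n h
    have h2 := grid_ub hβ (fun m => (hg m).2) 0 n h
    rw [h0] at h1 h2
    have hn : (0:ℝ) ≤ (n:ℝ) := by exact_mod_cast h
    rw [abs_of_nonneg (by nlinarith : (0:ℝ) ≤ t n), abs_of_nonneg hn]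
    simpa using h2
  · have h1 := grid_lb hβ (fun m => (hg m).1) n 0 h.le
    have h2 := grid_ub hβ (fun m => (hg m).2) n 0 h.le
    rw [h0] at h1 h2
    have hn : (n:ℝ) < 0 := by exact_mod_cast h
    rw [abs_of_nonpos (by nlinarith : t n ≤ 0), abs_of_neg hn]
    ring_nf at h1 h2 ⊢
    linarith

lemma wit_closed [CompactSpace X] (hφ : IsFlow X φ) (hβ : 0 < β)
    (hK : ∀ i, IsClosed (K i)) :
    IsClosed {q : ℤ → Fin N | ∃ x t, Wit φ β K q x t} := by
  classical
  set Box : Set (ℤ → ℝ) := univ.pi fun n : ℤ => Icc (-(3*β * |(n:ℝ)|)) (3*β * |(n:ℝ)|) with hBox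
  set S : Set ((ℤ → Fin N) × X × (ℤ → ℝ)) :=
    {ω | Wit φ β K ω.1 ω.2.1 ω.2.2} ∩ (univ ×ˢ univ ×ˢ Box) with hS
  have evt : ∀ n : ℤ, Continuous fun ω : (ℤ → Fin N) × X × (ℤ → ℝ) => ω.2.2 n :=
    fun n => (continuous_apply n).comp (continuous_snd.comp continuous_snd)
  have evq : ∀ n : ℤ, Continuous fun ω : (ℤ → Fin N) × X × (ℤ → ℝ) => ω.1 n :=
    fun n => (continuous_apply n).comp continuous_fst
  have evx : Continuous fun ω : (ℤ → Fin N) × X × (ℤ → ℝ) => ω.2.1 :=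
    continuous_fst.comp continuous_snd
  have hWclosed : IsClosed {ω : (ℤ → Fin N) × X × (ℤ → ℝ) | Wit φ β K ω.1 ω.2.1 ω.2.2} := by
    have : {ω : (ℤ → Fin N) × X × (ℤ → ℝ) | Wit φ β K ω.1 ω.2.1 ω.2.2}
        = {ω | ω.2.2 0 = 0} ∩
          ((⋂ n : ℤ, {ω | β ≤ ω.2.2 (n+1) - ω.2.2 n} ∩ {ω | ω.2.2 (n+1) - ω.2.2 n ≤ 3*β}) ∩
           (⋂ n : ℤ, ⋃ a : Fin N, {ω | ω.1 n = a} ∩ {ω | φ (ω.2.2 n) ω.2.1 ∈ K a})) := by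
      ext ω
      simp only [Wit, mem_setOf_eq, mem_inter_iff, mem_iInter, mem_iUnion]
      constructor
      · rintro ⟨a, b, c⟩
        exact ⟨a, ⟨fun n => ⟨(b n).1, (b n).2⟩, fun n => ⟨ω.1 n, rfl, c n⟩⟩⟩
      · rintro ⟨a, b, c⟩
        refine ⟨a, fun n => b n, fun n => ?_⟩
        obtain ⟨i, hi, hm⟩ := c n
        rwa [hi]
    rw [this]
    refine IsClosed.inter (isClosed_eq (evt 0) continuous_const) (IsClosed.inter ?_ ?_)
    · refine isClosed_iInter fun n => IsClosed.inter ?_ ?_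
      · exact isClosed_le continuous_const ((evt (n+1)).sub (evt n))
      · exact isClosed_le ((evt (n+1)).sub (evt n)) continuous_const
    · refine isClosed_iInter fun n => ?_
      refine isClosed_iUnion_of_finite fun a => IsClosed.inter ?_ ?_
      · exact isClosed_eq (evq n) continuous_const
      · exact (hK a).preimage (hφ.cont.comp (evx.prodMk (evt n)))
  have hSc : IsCompact S := by
    apply IsCompact.inter_left
    · exact isCompact_univ.prod (isCompact_univ.prod
        (isCompact_univ_pi fun n => isCompact_Icc))
    · exact hWclosed
  have himg : {q : ℤ → Fin N | ∃ x t, Wit φ β K q x t} = Prod.fst '' S := by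
    ext q
    simp only [mem_setOf_eq, mem_image]
    constructor
    · rintro ⟨x, t, hw⟩
      refine ⟨(q, x, t), ⟨hw, mem_univ _, mem_univ _, ?_⟩, rfl⟩
      intro n _
      have := wit_bounds hβ hw.1 hw.2.1 n
      exact abs_le.mp this
    · rintro ⟨⟨q', x, t⟩, ⟨hw, _⟩, rfl⟩
      exact ⟨x, t, hw⟩
  rw [himg]
  exact (hSc.image continuous_fst).isClosed

end BWAux3


namespace BWAux3
open BWAux2
variable {X : Type*} [MetricSpace X] {φ : ℝ → X → X} {N : ℕ} {K : Fin N → Set X} {β : ℝ}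

lemma hit_same (hφ : IsFlow X φ)
    (hnr : ∀ (i : Fin N) (w : X) (c : ℝ), w ∈ K i → φ c w ∈ K i → 0 < c → c ≤ 2*β → False)
    {x : X} {a a' : ℝ} {i : Fin N} (h1 : φ a x ∈ K i) (h2 : φ a' x ∈ K i)
    (h3 : |a - a'| ≤ 2*β) : a = a' := by
  rcases lt_trichotomy a a' with h | h | h
  · exfalso
    have e : φ (a' - a) (φ a x) = φ a' x := by rw [← hφ.map_add, sub_add_cancel]
    exact hnr i (φ a x) (a' - a) h1 (e ▸ h2) (by linarith) (by rw [abs_sub_comm] at h3; rw [abs_le] at h3; linarith [h3.2])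
  · exact h
  · exfalso
    have e : φ (a - a') (φ a' x) = φ a x := by rw [← hφ.map_add, sub_add_cancel]
    exact hnr i (φ a' x) (a - a') h2 (e ▸ h1) (by linarith) (by rw [abs_le] at h3; linarith [h3.2])

lemma wit_unique (hφ : IsFlow X φ) (hβ : 0 < β) (hβ1 : β ≤ 1/8)
    {δ γ e₀ : ℝ}
    (hE : ∀ (x y : X) (s : ℝ → ℝ), Continuous s → s 0 = 0 →
      (∀ u : ℝ, dist (φ u x) (φ (s u) y) < δ) → ∃ c : ℝ, |c| < 2*β ∧ y = φ c x)
    (hKdiam : ∀ i : Fin N, ∀ w ∈ K i, ∀ w' ∈ K i, dist w w' ≤ γ)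
    (hγδ : ∀ (y y' : X), dist y y' ≤ γ → ∀ a : ℝ, |a| ≤ 1 → dist (φ a y) (φ a y') < δ/2)
    (he₀ : ∀ (y : X) (a b : ℝ), |a| ≤ 1 → |b| ≤ 1 → |a - b| ≤ e₀ → dist (φ a y) (φ b y) < δ/2)
    (hhtc : ∀ (i j : Fin N) (w w' : X) (Δ Δ' : ℝ), w ∈ K i → w' ∈ K i →
      φ Δ w ∈ K j → φ Δ' w' ∈ K j → β ≤ Δ → Δ ≤ 3*β → β ≤ Δ' → Δ' ≤ 3*β → |Δ' - Δ| ≤ e₀)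
    (hnr : ∀ (i : Fin N) (w : X) (c : ℝ), w ∈ K i → φ c w ∈ K i → 0 < c → c ≤ 2*β → False)
    {q : ℤ → Fin N} {x : X} {t : ℤ → ℝ} {x' : X} {t' : ℤ → ℝ}
    (hw : Wit φ β K q x t) (hw' : Wit φ β K q x' t') :
    x = x' ∧ t = t' := by
  obtain ⟨h0, hg, hh⟩ := hw
  obtain ⟨h0', hg', hh'⟩ := hw'
  obtain ⟨s, hsc, hs0, hsp⟩ :=
    exists_interp hβ h0 h0' (fun n => (hg n).1) (fun n => (hg' n).1)
  have hclose : ∀ u : ℝ, dist (φ u x) (φ (s u) x') < δ := by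
    intro u
    obtain ⟨n, h1, h2, h3, h4, h5⟩ := hsp u
    have hΔ := hg n
    have hΔ' := hg' n
    have hwn : φ (t n) x ∈ K (q n) := hh n
    have hwn' : φ (t' n) x' ∈ K (q n) := hh' n
    have hwn1 : φ (t (n+1) - t n) (φ (t n) x) ∈ K (q (n+1)) := by
      rw [← hφ.map_add, sub_add_cancel]; exact hh (n+1)
    have hwn1' : φ (t' (n+1) - t' n) (φ (t' n) x') ∈ K (q (n+1)) := by
      rw [← hφ.map_add, sub_add_cancel]; exact hh' (n+1)
    have htc := hhtc (q n) (q (n+1)) (φ (t n) x) (φ (t' n) x') _ _ hwn hwn' hwn1 hwn1'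
      hΔ.1 hΔ.2 hΔ'.1 hΔ'.2
    have hab : |(u - t n) - (s u - t' n)| ≤ e₀ := by
      rw [abs_sub_comm]
      exact le_trans h5 htc
    have ha1 : |u - t n| ≤ 1 := by
      rw [abs_of_nonneg (by linarith)]
      linarith [hΔ.2]
    have hb1 : |s u - t' n| ≤ 1 := by
      rw [abs_of_nonneg h3]
      linarith [hΔ'.2]
    have e1 : φ u x = φ (u - t n) (φ (t n) x) := by
      rw [← hφ.map_add, sub_add_cancel]
    have e2 : φ (s u) x' = φ (s u - t' n) (φ (t' n) x') := by
      rw [← hφ.map_add, sub_add_cancel]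
    rw [e1, e2]
    have d1 : dist (φ (u - t n) (φ (t n) x)) (φ (u - t n) (φ (t' n) x')) < δ/2 :=
      hγδ _ _ (hKdiam (q n) _ hwn _ hwn') _ ha1
    have d2 : dist (φ (u - t n) (φ (t' n) x')) (φ (s u - t' n) (φ (t' n) x')) < δ/2 :=
      he₀ _ _ _ ha1 hb1 hab
    calc dist (φ (u - t n) (φ (t n) x)) (φ (s u - t' n) (φ (t' n) x'))
        ≤ dist (φ (u - t n) (φ (t n) x)) (φ (u - t n) (φ (t' n) x'))
          + dist (φ (u - t n) (φ (t' n) x')) (φ (s u - t' n) (φ (t' n) x')) := dist_triangle _ _ _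
      _ < δ := by linarith
  obtain ⟨c, hc, hcx⟩ := hE x x' s hsc hs0 hclose
  have hx0 : x ∈ K (q 0) := by have := hh 0; rwa [h0, hφ.map_zero] at this
  have hx0' : x' ∈ K (q 0) := by have := hh' 0; rwa [h0', hφ.map_zero] at this
  have hxx : x = x' := by
    rcases lt_trichotomy c 0 with h | h | h
    · exfalso
      have e : φ (-c) x' = x := by rw [hcx, ← hφ.map_add, neg_add_cancel, hφ.map_zero]
      refine hnr (q 0) x' (-c) hx0' (e ▸ hx0) (by linarith) ?_
      rw [abs_lt] at hc
      linarith [hc.1]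
    · rw [hcx, h, hφ.map_zero]
    · exfalso
      refine hnr (q 0) x c hx0 (hcx ▸ hx0') h ?_
      rw [abs_lt] at hc
      linarith [hc.2]
  subst hxx
  refine ⟨rfl, ?_⟩
  funext n
  induction n using Int.induction_on with
  | zero => rw [h0, h0']
  | succ n ih =>
      refine hit_same hφ hnr (hh (n+1)) (hh' (n+1)) ?_
      have a1 := hg n
      have a2 := hg' n
      rw [abs_le]
      constructor <;> linarith [a1.1, a1.2, a2.1, a2.2, ih.le, ih.ge]
  | pred n ih =>
      have e : (-(n:ℤ) - 1) + 1 = -(n:ℤ) := by ring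
      refine hit_same hφ hnr (hh (-(n:ℤ) - 1)) (hh' (-(n:ℤ) - 1)) ?_
      have a1 := hg (-(n:ℤ) - 1)
      have a2 := hg' (-(n:ℤ) - 1)
      rw [e] at a1 a2
      rw [abs_le]
      constructor <;> linarith [a1.1, a1.2, a2.1, a2.2, ih.le, ih.ge]

end BWAux3

namespace BWAux3
open BWAux2

lemma exists_wit_through {X : Type*} [MetricSpace X] {φ : ℝ → X → X} {N : ℕ}
    {K : Fin N → Set X} {β : ℝ} (hφ : IsFlow X φ) (hβ : 0 < β)
    (hhit : ∀ y : X, ∃ (i : Fin N) (Δ : ℝ), β ≤ Δ ∧ Δ ≤ 3*β ∧ φ Δ y ∈ K i)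
    (hhit' : ∀ y : X, ∃ (i : Fin N) (Δ : ℝ), β ≤ Δ ∧ Δ ≤ 3*β ∧ φ (-Δ) y ∈ K i)
    (x : X) :
    ∃ (q : ℤ → Fin N) (x₀ : X) (t : ℤ → ℝ) (u : ℝ),
      Wit φ β K q x₀ t ∧ 0 ≤ u ∧ u ≤ t 1 ∧ φ u x₀ = x := by
  classical
  obtain ⟨J, D, hD1, hD2, hD3⟩ :
      ∃ (J : X → Fin N) (D : X → ℝ), (∀ y, β ≤ D y) ∧ (∀ y, D y ≤ 3*β) ∧
        (∀ y, φ (D y) y ∈ K (J y)) := by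
    choose J D h1 h2 h3 using hhit
    exact ⟨J, D, h1, h2, h3⟩
  obtain ⟨J', D', hD1', hD2', hD3'⟩ :
      ∃ (J' : X → Fin N) (D' : X → ℝ), (∀ y, β ≤ D' y) ∧ (∀ y, D' y ≤ 3*β) ∧
        (∀ y, φ (-(D' y)) y ∈ K (J' y)) := by
    choose J D h1 h2 h3 using hhit'
    exact ⟨J, D, h1, h2, h3⟩
  obtain ⟨i₀, Δ₀, hΔ₀1, hΔ₀2, hw₀⟩ := hhit' x
  set w₀ := φ (-Δ₀) x with hw₀def
  -- forward sequence
  set PA : ℕ → X × ℝ := fun m => Nat.rec (w₀, 0) (fun _ pa => (φ (D pa.1) pa.1, pa.2 + D pa.1)) m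
    with hPA
  set P : ℕ → X := fun m => (PA m).1 with hP
  set A : ℕ → ℝ := fun m => (PA m).2 with hA
  have hPs : ∀ m, P (m+1) = φ (D (P m)) (P m) := fun m => rfl
  have hAs : ∀ m, A (m+1) = A m + D (P m) := fun m => rfl
  have hP0 : P 0 = w₀ := rfl
  have hA0 : A 0 = 0 := rfl
  have hPA' : ∀ m, φ (A m) w₀ = P m := by
    intro m
    induction m with
    | zero => rw [hA0, hφ.map_zero, hP0]
    | succ m ih =>
        rw [hAs, hPs, add_comm (A m) (D (P m)), hφ.map_add, ih]
  -- backward sequence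
  set QB : ℕ → X × ℝ := fun m =>
    Nat.rec (w₀, 0) (fun _ qb => (φ (-(D' qb.1)) qb.1, qb.2 - D' qb.1)) m with hQB
  set Q : ℕ → X := fun m => (QB m).1 with hQ
  set B : ℕ → ℝ := fun m => (QB m).2 with hB
  have hQs : ∀ m, Q (m+1) = φ (-(D' (Q m))) (Q m) := fun m => rfl
  have hBs : ∀ m, B (m+1) = B m - D' (Q m) := fun m => rfl
  have hQ0 : Q 0 = w₀ := rfl
  have hB0 : B 0 = 0 := rfl
  have hQB' : ∀ m, φ (B m) w₀ = Q m := by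
    intro m
    induction m with
    | zero => rw [hB0, hφ.map_zero, hQ0]
    | succ m ih =>
        rw [hBs, hQs, show B m - D' (Q m) = -(D' (Q m)) + B m from by ring, hφ.map_add, ih]
  -- glue
  obtain ⟨t, ht⟩ : ∃ t : ℤ → ℝ, t = fun n : ℤ => if 0 ≤ n then A n.toNat else B (-n).toNat :=
    ⟨_, rfl⟩
  obtain ⟨q, hq⟩ : ∃ q : ℤ → Fin N, q = fun n : ℤ =>
      if 1 ≤ n then J (P (n.toNat - 1)) else if n = 0 then i₀ else J' (Q ((-n).toNat - 1)) :=
    ⟨_, rfl⟩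
  have tpos : ∀ n : ℤ, 0 ≤ n → t n = A n.toNat := by
    intro n hn; rw [ht]; simp only []; rw [if_pos hn]
  have tneg : ∀ n : ℤ, ¬ (0:ℤ) ≤ n → t n = B (-n).toNat := by
    intro n hn; rw [ht]; simp only []; rw [if_neg hn]
  have qpos : ∀ n : ℤ, 1 ≤ n → q n = J (P (n.toNat - 1)) := by
    intro n hn; rw [hq]; simp only []; rw [if_pos hn]
  have qzero : q 0 = i₀ := by
    rw [hq]; norm_num
  have qneg : ∀ n : ℤ, n < 0 → q n = J' (Q ((-n).toNat - 1)) := by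
    intro n hn
    have h1 : ¬ (1:ℤ) ≤ n := by omega
    have h2 : ¬ n = 0 := by omega
    rw [hq]; simp only []; rw [if_neg h1, if_neg h2]
  have ht0 : t 0 = 0 := by rw [tpos 0 le_rfl]; exact hA0
  have hgap : ∀ n : ℤ, β ≤ t (n+1) - t n ∧ t (n+1) - t n ≤ 3*β := by
    intro n
    rcases le_or_gt 0 n with h | h
    · have e1 : t n = A n.toNat := tpos n h
      have e2 : t (n+1) = A (n.toNat + 1) := by
        have e : (n+1).toNat = n.toNat + 1 := by omega
        rw [tpos (n+1) (by omega), e]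
      rw [e1, e2, hAs]
      exact ⟨by linarith [hD1 (P n.toNat)], by linarith [hD2 (P n.toNat)]⟩
    · rcases eq_or_lt_of_le (by omega : n ≤ -1) with h2 | h2
      · rw [h2]
        have e1 : t (-1) = B 1 := by rw [tneg (-1) (by omega)]; norm_num
        have e2 : t ((-1) + 1) = A 0 := by rw [tpos ((-1)+1) (by omega)]; norm_num
        have hB1 : B 1 = B 0 - D' (Q 0) := hBs 0
        rw [e1, e2, hA0, hB1, hB0]
        exact ⟨by linarith [hD1' (Q 0)], by linarith [hD2' (Q 0)]⟩
      · have e1 : t n = B ((-(n+1)).toNat + 1) := by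
          have e : (-n).toNat = (-(n+1)).toNat + 1 := by omega
          rw [tneg n (by omega), e]
        have e2 : t (n+1) = B ((-(n+1)).toNat) := tneg (n+1) (by omega)
        rw [e1, e2, hBs]
        exact ⟨by linarith [hD1' (Q (-(n+1)).toNat)], by linarith [hD2' (Q (-(n+1)).toNat)]⟩
  have hhits : ∀ n : ℤ, φ (t n) w₀ ∈ K (q n) := by
    intro n
    rcases lt_trichotomy n 0 with h | h | h
    · have e1 : t n = B (((-n).toNat - 1) + 1) := by
        have e : (-n).toNat = ((-n).toNat - 1) + 1 := by omega
        rw [tneg n (by omega)]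
        rw [← e]
      rw [e1, qneg n h]
      have h1 : Q (((-n).toNat - 1) + 1) ∈ K (J' (Q ((-n).toNat - 1))) := by
        rw [hQs]; exact hD3' (Q ((-n).toNat - 1))
      exact (hQB' (((-n).toNat - 1) + 1)).symm ▸ h1
    · rw [h, ht0, hφ.map_zero, qzero, hw₀def]
      exact hw₀
    · have e1 : t n = A ((n.toNat - 1) + 1) := by
        have e : n.toNat = (n.toNat - 1) + 1 := by omega
        rw [tpos n (by omega)]
        rw [← e]
      rw [e1, qpos n (by omega)]
      have h1 : P ((n.toNat - 1) + 1) ∈ K (J (P (n.toNat - 1))) := by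
        rw [hPs]; exact hD3 (P (n.toNat - 1))
      exact (hPA' ((n.toNat - 1) + 1)).symm ▸ h1
  -- index of Δ₀
  obtain ⟨m, hm1, hm2, _⟩ := grid_idx hβ ht0 (fun n => (hgap n).1) Δ₀
  refine ⟨fun k => q (m + k), φ (t m) w₀, fun k => t (m + k) - t m, Δ₀ - t m,
    ⟨by simp, fun k => ?_, fun k => ?_⟩, by linarith, ?_, ?_⟩
  · simp only []
    have e : m + (k + 1) = (m + k) + 1 := by ring
    rw [e]
    have h9 := hgap (m + k)
    exact ⟨by linarith [h9.1], by linarith [h9.2]⟩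
  · have e : φ (t (m+k) - t m) (φ (t m) w₀) = φ (t (m+k)) w₀ := by
      rw [← hφ.map_add, sub_add_cancel]
    simp only []
    rw [e]
    exact hhits (m+k)
  · simp only []
    linarith [hm2.le]
  · have e : φ (Δ₀ - t m) (φ (t m) w₀) = φ Δ₀ w₀ := by
      rw [← hφ.map_add, sub_add_cancel]
    rw [e, hw₀def, ← hφ.map_add, add_neg_cancel, hφ.map_zero]

end BWAux3

namespace BWAux3
open BWAux2
variable {X : Type*} [MetricSpace X] {φ : ℝ → X → X} {N : ℕ} {K : Fin N → Set X} {β : ℝ}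

lemma wit_compact [CompactSpace X] (hφ : IsFlow X φ) (hβ : 0 < β)
    (hK : ∀ i, IsClosed (K i)) :
    IsCompact {ω : (ℤ → Fin N) × X × (ℤ → ℝ) | Wit φ β K ω.1 ω.2.1 ω.2.2} := by
  classical
  have evt : ∀ n : ℤ, Continuous fun ω : (ℤ → Fin N) × X × (ℤ → ℝ) => ω.2.2 n :=
    fun n => (continuous_apply n).comp (continuous_snd.comp continuous_snd)
  have evq : ∀ n : ℤ, Continuous fun ω : (ℤ → Fin N) × X × (ℤ → ℝ) => ω.1 n :=
    fun n => (continuous_apply n).comp continuous_fst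
  have evx : Continuous fun ω : (ℤ → Fin N) × X × (ℤ → ℝ) => ω.2.1 :=
    continuous_fst.comp continuous_snd
  have hWclosed : IsClosed {ω : (ℤ → Fin N) × X × (ℤ → ℝ) | Wit φ β K ω.1 ω.2.1 ω.2.2} := by
    have : {ω : (ℤ → Fin N) × X × (ℤ → ℝ) | Wit φ β K ω.1 ω.2.1 ω.2.2}
        = {ω | ω.2.2 0 = 0} ∩
          ((⋂ n : ℤ, {ω | β ≤ ω.2.2 (n+1) - ω.2.2 n} ∩ {ω | ω.2.2 (n+1) - ω.2.2 n ≤ 3*β}) ∩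
           (⋂ n : ℤ, ⋃ a : Fin N, {ω | ω.1 n = a} ∩ {ω | φ (ω.2.2 n) ω.2.1 ∈ K a})) := by
      ext ω
      simp only [Wit, mem_setOf_eq, mem_inter_iff, mem_iInter, mem_iUnion]
      constructor
      · rintro ⟨a, b, c⟩
        exact ⟨a, ⟨fun n => ⟨(b n).1, (b n).2⟩, fun n => ⟨ω.1 n, rfl, c n⟩⟩⟩
      · rintro ⟨a, b, c⟩
        refine ⟨a, fun n => b n, fun n => ?_⟩
        obtain ⟨i, hi, hm⟩ := c n
        rwa [hi]
    rw [this]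
    refine IsClosed.inter (isClosed_eq (evt 0) continuous_const) (IsClosed.inter ?_ ?_)
    · refine isClosed_iInter fun n => IsClosed.inter ?_ ?_
      · exact isClosed_le continuous_const ((evt (n+1)).sub (evt n))
      · exact isClosed_le ((evt (n+1)).sub (evt n)) continuous_const
    · refine isClosed_iInter fun n => ?_
      refine isClosed_iUnion_of_finite fun a => IsClosed.inter ?_ ?_
      · exact isClosed_eq (evq n) continuous_const
      · exact (hK a).preimage (hφ.cont.comp (evx.prodMk (evt n)))
  have hbox : IsCompact ((univ : Set (ℤ → Fin N)) ×ˢ (univ : Set X) ×ˢ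
      (univ.pi fun n : ℤ => Icc (-(3*β * |(n:ℝ)|)) (3*β * |(n:ℝ)|))) :=
    isCompact_univ.prod (isCompact_univ.prod (isCompact_univ_pi fun n => isCompact_Icc))
  refine hbox.of_isClosed_subset hWclosed ?_
  rintro ⟨q, x, t⟩ hw
  refine ⟨mem_univ _, mem_univ _, fun n _ => ?_⟩
  exact abs_le.mp (wit_bounds hβ hw.1 hw.2.1 n)

lemma assembly [CompactSpace X] [Nonempty X]
    (hφ : IsFlow X φ) (hβ : 0 < β) (hK : ∀ i, IsClosed (K i))
    (huniq : ∀ (q : ℤ → Fin N) (x : X) (t : ℤ → ℝ) (x' : X) (t' : ℤ → ℝ),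
      Wit φ β K q x t → Wit φ β K q x' t' → x = x' ∧ t = t')
    (hhit : ∀ y : X, ∃ (i : Fin N) (Δ : ℝ), β ≤ Δ ∧ Δ ≤ 3*β ∧ φ Δ y ∈ K i)
    (hhit' : ∀ y : X, ∃ (i : Fin N) (Δ : ℝ), β ≤ Δ ∧ Δ ≤ 3*β ∧ φ (-Δ) y ∈ K i) :
    ∃ (Λ : Set (ℤ → Fin N)) (f : (ℤ → Fin N) → ℝ) (p : (ℤ → Fin N) → X),
      IsClosed Λ ∧
      (∀ q : ℤ → Fin N, q ∈ Λ ↔ (fun i => q (i + 1)) ∈ Λ) ∧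
      ContinuousOn f Λ ∧ (∀ q ∈ Λ, 0 < f q) ∧
      ContinuousOn p Λ ∧
      (∀ q ∈ Λ, φ (f q) (p q) = p (fun i => q (i + 1))) ∧
      (∀ x : X, ∃ q ∈ Λ, ∃ t : ℝ, 0 ≤ t ∧ t ≤ f q ∧ φ t (p q) = x) := by
  classical
  obtain ⟨Λ, hΛ⟩ : ∃ Λ : Set (ℤ → Fin N), Λ = {q | ∃ x t, Wit φ β K q x t} := ⟨_, rfl⟩
  obtain ⟨Ω, hΩ⟩ : ∃ Ω : Set ((ℤ → Fin N) × X × (ℤ → ℝ)),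
      Ω = {ω | Wit φ β K ω.1 ω.2.1 ω.2.2} := ⟨_, rfl⟩
  have hΩcomp : IsCompact Ω := hΩ ▸ wit_compact hφ hβ hK
  have hΛΩ : Λ = Prod.fst '' Ω := by
    rw [hΛ, hΩ]
    ext q
    simp only [mem_setOf_eq, mem_image]
    constructor
    · rintro ⟨x, t, hw⟩; exact ⟨(q, x, t), hw, rfl⟩
    · rintro ⟨⟨q', x, t⟩, hw, rfl⟩; exact ⟨x, t, hw⟩
  have hΛclosed : IsClosed Λ := by
    rw [hΛΩ]; exact (hΩcomp.image continuous_fst).isClosed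
  -- choice of canonical witness
  have hps : ∀ q : ℤ → Fin N, ∃ xt : X × (ℤ → ℝ), q ∈ Λ → Wit φ β K q xt.1 xt.2 := by
    intro q
    by_cases h : q ∈ Λ
    · rw [hΛ] at h
      obtain ⟨x, t, hw⟩ := h
      exact ⟨(x, t), fun _ => hw⟩
    · exact ⟨(Classical.arbitrary X, fun _ => 0), fun h' => absurd h' h⟩
  choose w hw using hps
  obtain ⟨p, hp⟩ : ∃ p : (ℤ → Fin N) → X, p = fun q => (w q).1 := ⟨_, rfl⟩
  obtain ⟨tf, htf⟩ : ∃ tf : (ℤ → Fin N) → (ℤ → ℝ), tf = fun q => (w q).2 := ⟨_, rfl⟩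
  obtain ⟨f, hf⟩ : ∃ f : (ℤ → Fin N) → ℝ, f = fun q => tf q 1 := ⟨_, rfl⟩
  have hwit : ∀ q ∈ Λ, Wit φ β K q (p q) (tf q) := by
    intro q h
    rw [hp, htf]
    exact hw q h
  have hmem : ∀ (q : ℤ → Fin N) (x : X) (t : ℤ → ℝ), Wit φ β K q x t → q ∈ Λ := by
    intro q x t hwq
    rw [hΛ]; exact ⟨x, t, hwq⟩
  -- identification
  have hident : ∀ (q : ℤ → Fin N) (x : X) (t : ℤ → ℝ), Wit φ β K q x t →
      p q = x ∧ tf q = t := by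
    intro q x t hwq
    have h := huniq q (p q) (tf q) x t (hwit q (hmem q x t hwq)) hwq
    exact ⟨h.1, h.2⟩
  -- shift invariance
  have hshift : ∀ q : ℤ → Fin N, q ∈ Λ ↔ (fun i => q (i + 1)) ∈ Λ := by
    intro q
    constructor
    · intro h
      exact hmem _ _ _ (wit_shift hφ (hwit q h))
    · intro h
      rw [hΛ] at h
      obtain ⟨x', t', hw'⟩ := h
      exact hmem _ _ _ (wit_unshift hφ hw')
  -- positivity of f
  have hfpos : ∀ q ∈ Λ, 0 < f q := by
    intro q h
    have hwq := hwit q h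
    have h1 := (hwq.2.1 0).1
    rw [hwq.1] at h1
    norm_num at h1
    rw [hf]
    simp only []
    linarith
  -- equivariance
  have hequi : ∀ q ∈ Λ, φ (f q) (p q) = p (fun i => q (i + 1)) := by
    intro q h
    have hws := wit_shift hφ (hwit q h)
    have hfq : f q = tf q 1 := by rw [hf]
    rw [hfq]
    exact ((hident _ _ _ hws).1).symm
  -- continuity via homeomorphism between Ω and Λ
  haveI hcs : CompactSpace ↥Ω := isCompact_iff_compactSpace.mp hΩcomp
  have hΩwit : ∀ ω : ↥Ω, Wit φ β K ω.val.1 ω.val.2.1 ω.val.2.2 := by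
    intro ω; exact (Set.ext_iff.mp hΩ ω.val).mp ω.prop
  have hkey : ∀ ω : ↥Ω, p ω.val.1 = ω.val.2.1 ∧ tf ω.val.1 = ω.val.2.2 :=
    fun ω => hident _ _ _ (hΩwit ω)
  obtain ⟨F, hFdef⟩ : ∃ F : ↥Ω → ↥Λ, F = fun ω =>
      (⟨ω.val.1, hmem _ _ _ (hΩwit ω)⟩ : ↥Λ) := ⟨_, rfl⟩
  have hFval : ∀ ω : ↥Ω, (F ω).val = ω.val.1 := by intro ω; rw [hFdef]
  have hFcont : Continuous F := by
    rw [hFdef]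
    exact Continuous.subtype_mk (continuous_fst.comp continuous_subtype_val) _
  have hFbij : Function.Bijective F := by
    constructor
    · intro ω ω' h
      apply Subtype.ext
      have h1 : ω.val.1 = ω'.val.1 := by rw [← hFval ω, ← hFval ω', h]
      have h2 := hΩwit ω
      have h3 := hΩwit ω'
      rw [h1] at h2
      have h4 := huniq _ _ _ _ _ h2 h3
      have e1 : ω.val = (ω.val.1, ω.val.2.1, ω.val.2.2) := rfl
      have e2 : ω'.val = (ω'.val.1, ω'.val.2.1, ω'.val.2.2) := rfl
      rw [e1, e2, h1, h4.1, h4.2]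
    · intro q
      refine ⟨⟨(q.val, p q.val, tf q.val), ?_⟩, ?_⟩
      · exact (Set.ext_iff.mp hΩ _).mpr (hwit q.val q.prop)
      · apply Subtype.ext
        rw [hFval]
  obtain ⟨e, he1, he2⟩ : ∃ e : ↥Ω ≃ₜ ↥Λ, Continuous ⇑e.symm ∧ ∀ q : ↥Λ, F (e.symm q) = q := by
    refine ⟨hFcont.homeoOfEquivCompactToT2 (f := Equiv.ofBijective F hFbij),
      (hFcont.homeoOfEquivCompactToT2 (f := Equiv.ofBijective F hFbij)).symm.continuous,
      fun q => ?_⟩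
    exact (hFcont.homeoOfEquivCompactToT2 (f := Equiv.ofBijective F hFbij)).apply_symm_apply q
  have hsymm1 : ∀ q : ↥Λ, (e.symm q).val.1 = q.val := by
    intro q
    have := congrArg Subtype.val (he2 q)
    rwa [hFval] at this
  have hpcont : ContinuousOn p Λ := by
    rw [continuousOn_iff_continuous_restrict]
    have hre : Λ.restrict p = (fun ω : ↥Ω => ω.val.2.1) ∘ ⇑e.symm := by
      funext q
      have h1 := hsymm1 q
      have h2 := (hkey (e.symm q)).1
      simp only [Function.comp_apply, Set.restrict_apply]
      show p q.val = _
      rw [← h2, h1]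
    change Continuous (Λ.restrict p)
    rw [hre]
    exact ((continuous_fst.comp (continuous_snd.comp continuous_subtype_val))).comp he1
  have hfcont : ContinuousOn f Λ := by
    rw [continuousOn_iff_continuous_restrict]
    have hre : Λ.restrict f = (fun ω : ↥Ω => ω.val.2.2 1) ∘ ⇑e.symm := by
      funext q
      have h1 := hsymm1 q
      have h2 := (hkey (e.symm q)).2
      simp only [Function.comp_apply, Set.restrict_apply]
      show f q.val = _
      rw [hf]
      simp only []
      rw [← h2, h1]
    change Continuous (Λ.restrict f)
    rw [hre]
    exact (((continuous_apply (1:ℤ)).comp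
      (continuous_snd.comp (continuous_snd.comp continuous_subtype_val)))).comp he1
  -- covering
  have hcover : ∀ x : X, ∃ q ∈ Λ, ∃ u : ℝ, 0 ≤ u ∧ u ≤ f q ∧ φ u (p q) = x := by
    intro x
    obtain ⟨q, x₀, t, u, hwq, hu0, hu1, hux⟩ := exists_wit_through hφ hβ hhit hhit' x
    have hq : q ∈ Λ := hmem _ _ _ hwq
    have hid := hident _ _ _ hwq
    refine ⟨q, hq, u, hu0, ?_, ?_⟩
    · rw [hf]
      simp only []
      rw [hid.2]
      exact hu1
    · rw [hid.1]
      exact hux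
  exact ⟨Λ, f, p, hΛclosed, hshift, hfcont, hfpos, hpcont, hequi, hcover⟩

end BWAux3

end BW


set_option maxHeartbeats 2000000 in
open BW BW.BWAux2 BW.BWAux3 in
/-- **Bowen–Walters.** An expansive topological flow without fixed points is a topological
factor of a suspension flow over a subshift: there are a finite alphabet `Fin N`, a subshift
`Λ ⊆ (Fin N)^ℤ`, a positive continuous roof function `f` on `Λ` and a continuous map
`p : Λ → X` inducing a continuous equivariant surjection `π : Λ_f → X`, `π(q,t) = Φ_t(p(q))`
(the conditions below encode compatibility with the identification `(q, f q) ∼ (σ q, 0)`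
and surjectivity of `π`). -/
theorem expansive_factor_of_symbolic_suspension
    {X : Type*} [MetricSpace X] [CompactSpace X]
    (φ : ℝ → X → X) (hφ : IsFlow X φ) (hexp : IsExpansive φ)
    (hfix : ∀ x : X, ¬ IsFixedPoint φ x) :
    ∃ (N : ℕ) (Λ : Set (ℤ → Fin N)) (f : (ℤ → Fin N) → ℝ) (p : (ℤ → Fin N) → X),
      IsClosed Λ ∧
      (∀ q : ℤ → Fin N, q ∈ Λ ↔ (fun i => q (i + 1)) ∈ Λ) ∧
      ContinuousOn f Λ ∧ (∀ q ∈ Λ, 0 < f q) ∧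
      ContinuousOn p Λ ∧
      (∀ q ∈ Λ, φ (f q) (p q) = p (fun i => q (i + 1))) ∧
      (∀ x : X, ∃ q ∈ Λ, ∃ t : ℝ, 0 ≤ t ∧ t ≤ f q ∧ φ t (p q) = x) := by
  classical
  rcases isEmpty_or_nonempty X with hX | hX
  · refine ⟨0, ∅, fun _ => 1, fun q => (q 0).elim0, isClosed_empty,
      fun q => (q 0).elim0, continuousOn_empty _, fun q hq => absurd hq (notMem_empty q),
      continuousOn_empty _, fun q hq => absurd hq (notMem_empty q),
      fun x => (IsEmpty.false x).elim⟩
  -- uniform motion constants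
  obtain ⟨T₀, ρ, hT₀, hρ, hmot⟩ : ∃ T₀ ρ : ℝ, 0 < T₀ ∧ 0 < ρ ∧
      ∀ z : X, ∃ τ : ℝ, 0 < τ ∧ τ ≤ T₀ ∧ 2*ρ ≤ dist (φ τ z) z := by
    have hpt : ∀ x : X, ∃ τ ρx : ℝ, 0 < τ ∧ 0 < ρx ∧ 2*ρx < dist (φ τ x) x := by
      intro x
      obtain ⟨t, ht⟩ : ∃ t : ℝ, φ t x ≠ x := by
        by_contra h; push_neg at h; exact hfix x h
      have htne : t ≠ 0 := by rintro rfl; exact ht (hφ.map_zero x)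
      have habs : φ |t| x ≠ x := by
        rcases abs_choice t with h | h
        · rwa [h]
        · rw [h]
          intro hc
          apply ht
          have h2 := congrArg (φ t) hc
          rw [flow_add_apply hφ, add_neg_cancel, hφ.map_zero] at h2
          exact h2.symm
      have hd : 0 < dist (φ |t| x) x := dist_pos.mpr habs
      exact ⟨|t|, dist (φ |t| x) x / 4, abs_pos.mpr htne, by linarith, by linarith⟩
    choose τm ρm hτm hρm hdm using hpt
    have hUopen : ∀ x : X, IsOpen {y : X | 2*ρm x < dist (φ (τm x) y) y} := by
      intro x
      exact isOpen_lt continuous_const ((flow_cont_apply hφ (τm x)).dist continuous_id)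
    obtain ⟨F, hF⟩ := isCompact_univ.elim_finite_subcover
      (fun x : X => {y : X | 2*ρm x < dist (φ (τm x) y) y}) hUopen
      (fun z _ => mem_iUnion.mpr ⟨z, hdm z⟩)
    have hFne : F.Nonempty := by
      obtain ⟨x⟩ := hX
      have h := hF (mem_univ x)
      rw [mem_iUnion₂] at h
      obtain ⟨i, hi, _⟩ := h
      exact ⟨i, hi⟩
    refine ⟨F.sup' hFne τm, F.inf' hFne ρm, ?_, ?_, ?_⟩
    · obtain ⟨i, hi⟩ := hFne
      exact lt_of_lt_of_le (hτm i) (Finset.le_sup' τm hi)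
    · rw [Finset.lt_inf'_iff]
      exact fun i _ => hρm i
    · intro z
      have h := hF (mem_univ z)
      rw [mem_iUnion₂] at h
      obtain ⟨i, hiF, hzi⟩ := h
      refine ⟨τm i, hτm i, Finset.le_sup' τm hiF, ?_⟩
      have h1 : F.inf' hFne ρm ≤ ρm i := Finset.inf'_le _ hiF
      have h2 : 2*ρm i < dist (φ (τm i) z) z := hzi
      linarith
  -- R and derivative property
  obtain ⟨R₀, hR₀pos, hR₀⟩ := flow_uc hφ T₀ (ρ/2) (by linarith)
  obtain ⟨R, hRdef⟩ : ∃ R : ℝ, R = min R₀ (ρ/4) := ⟨_, rfl⟩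
  have hRpos : 0 < R := by rw [hRdef]; exact lt_min hR₀pos (by linarith)
  have hder : ∀ (z u : X) (τ : ℝ), 0 < τ → τ ≤ T₀ → 2*ρ ≤ dist (φ τ z) z →
      dist u z ≤ R → dist u z + ρ ≤ dist (φ τ u) z := by
    intro z u τ hτ0 hτT hmot2 hu
    have h1 : dist (φ τ u) (φ τ z) < ρ/2 := by
      refine hR₀ u z τ τ ?_ ?_ ?_ (by simpa using hR₀pos.le)
      · rw [abs_of_pos hτ0]; exact hτT
      · rw [abs_of_pos hτ0]; exact hτT
      · exact le_trans hu (by rw [hRdef]; exact min_le_left _ _)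
    have h2 := dist_triangle (φ τ z) (φ τ u) z
    rw [dist_comm (φ τ z) (φ τ u)] at h2
    have h3 : dist u z ≤ ρ/4 := le_trans hu (by rw [hRdef]; exact min_le_right _ _)
    linarith
  -- β
  obtain ⟨γβ, hγβpos, hγβ⟩ := flow_uc hφ 1 (R/2) (by linarith)
  obtain ⟨β, hβdef⟩ : ∃ β : ℝ, β = min (γβ/2) (1/8) := ⟨_, rfl⟩
  have hβpos : 0 < β := by rw [hβdef]; exact lt_min (by linarith) (by norm_num)
  have hβ18 : β ≤ 1/8 := by rw [hβdef]; exact min_le_right _ _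
  have hβγ : 2*β ≤ γβ := by
    rw [hβdef]
    have := min_le_left (γβ/2) (1/8:ℝ)
    linarith
  have hmove : ∀ (y : X) (τ : ℝ), |τ| ≤ 2*β → dist (φ τ y) y < R/2 := by
    intro y τ h
    have h1 : |τ| ≤ 1 := le_trans h (by linarith)
    have h2 := hγβ y y τ 0 h1 (by norm_num) (by simpa using hγβpos.le)
      (by simpa using le_trans h hβγ)
    rwa [hφ.map_zero] at h2
  -- δ₀ from expansiveness
  obtain ⟨δ₀, hδ₀pos, hδ₀⟩ := hexp (2*β) (by linarith)
  -- e₀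
  obtain ⟨γe, hγepos, hγe⟩ := flow_uc hφ 1 (δ₀/2) (by linarith)
  obtain ⟨e₀, he₀def⟩ : ∃ e₀ : ℝ, e₀ = min γe β := ⟨_, rfl⟩
  have he₀pos : 0 < e₀ := by rw [he₀def]; exact lt_min hγepos hβpos
  have he₀ : ∀ (y : X) (a b : ℝ), |a| ≤ 1 → |b| ≤ 1 → |a - b| ≤ e₀ →
      dist (φ a y) (φ b y) < δ₀/2 := by
    intro y a b ha hb hab
    exact hγe y y a b ha hb (by simpa using hγepos.le)
      (le_trans hab (by rw [he₀def]; exact min_le_left _ _))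
  -- γc and V-difference bound
  obtain ⟨γc, hγcpos, hγc⟩ := flow_uc hφ T₀ (ρ*e₀/(2*(T₀+1))) (by positivity)
  have hVdiff : ∀ (z : X) (τ : ℝ), 0 ≤ τ → τ ≤ T₀ → ∀ w w' : X, dist w w' ≤ γc →
      |Vfn φ z τ w - Vfn φ z τ w'| ≤ ρ*e₀/2 := by
    intro z τ h0 hT w w' hww
    have hB : ∀ s ∈ Icc (0:ℝ) τ, dist (φ s w) (φ s w') ≤ ρ*e₀/(2*(T₀+1)) := by
      intro s hs
      have h1 : |s| ≤ T₀ := by rw [abs_of_nonneg hs.1]; linarith [hs.2]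
      exact (hγc w w' s s h1 h1 hww (by simpa using hγcpos.le)).le
    have h2 := vfn_dist_le hφ z h0 w w' hB
    calc |Vfn φ z τ w - Vfn φ z τ w'| ≤ τ * (ρ*e₀/(2*(T₀+1))) := h2
    _ ≤ ρ*e₀/2 := by
        rw [mul_div_assoc', div_le_div_iff₀ (by linarith) (by norm_num)]
        nlinarith [mul_nonneg (mul_pos hρ he₀pos).le (by linarith : (0:ℝ) ≤ T₀ + 1 - τ)]
  -- γ
  obtain ⟨γm, hγmpos, hγm⟩ := flow_uc hφ 1 (min (δ₀/2) (min γc (R/4)))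
    (lt_min (by linarith) (lt_min hγcpos (by linarith)))
  obtain ⟨γ, hγdef⟩ : ∃ γ : ℝ, γ = min γm (R/2) := ⟨_, rfl⟩
  have hγpos : 0 < γ := by rw [hγdef]; exact lt_min hγmpos (by linarith)
  have hγR : γ ≤ R/2 := by rw [hγdef]; exact min_le_right _ _
  have hγprop : ∀ (y y' : X), dist y y' ≤ γ → ∀ a : ℝ, |a| ≤ 1 →
      dist (φ a y) (φ a y') < min (δ₀/2) (min γc (R/4)) := by
    intro y y' h a ha
    exact hγm y y' a a ha ha (le_trans h (by rw [hγdef]; exact min_le_left _ _))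
      (by simpa using hγmpos.le)
  -- s₁ and crossing-time scale
  obtain ⟨γs, hγspos, hγs⟩ := flow_uc hφ 1 (γ/4) (by linarith)
  obtain ⟨s₁, hs₁def⟩ : ∃ s₁ : ℝ, s₁ = min γs 1 := ⟨_, rfl⟩
  have hs₁pos : 0 < s₁ := by rw [hs₁def]; exact lt_min hγspos one_pos
  have hmove2 : ∀ (y : X) (τ : ℝ), |τ| ≤ s₁ → dist (φ τ y) y < γ/4 := by
    intro y τ h
    have h1 : |τ| ≤ 1 := le_trans h (by rw [hs₁def]; exact min_le_right _ _)
    have h2 := hγs y y τ 0 h1 (by norm_num) (by simpa using hγspos.le)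
      (by simpa using le_trans h (by rw [hs₁def]; exact min_le_left _ _))
    rwa [hφ.map_zero] at h2
  obtain ⟨th, hthdef⟩ : ∃ th : ℝ, th = min (β/2) s₁ := ⟨_, rfl⟩
  have hthpos : 0 < th := by rw [hthdef]; exact lt_min (by linarith) hs₁pos
  have hthβ : th ≤ β/2 := by rw [hthdef]; exact min_le_left _ _
  have hths : th ≤ s₁ := by rw [hthdef]; exact min_le_right _ _
  -- r₁
  obtain ⟨γr, hγrpos, hγr⟩ := flow_uc hφ T₀ (ρ*th/(2*(T₀+1))) (by positivity)
  have hVdiff2 : ∀ (z : X) (τ : ℝ), 0 ≤ τ → τ ≤ T₀ → ∀ w w' : X, dist w w' ≤ γr →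
      |Vfn φ z τ w - Vfn φ z τ w'| ≤ ρ*th/2 := by
    intro z τ h0 hT w w' hww
    have hB : ∀ s ∈ Icc (0:ℝ) τ, dist (φ s w) (φ s w') ≤ ρ*th/(2*(T₀+1)) := by
      intro s hs
      have h1 : |s| ≤ T₀ := by rw [abs_of_nonneg hs.1]; linarith [hs.2]
      exact (hγr w w' s s h1 h1 hww (by simpa using hγrpos.le)).le
    have h2 := vfn_dist_le hφ z h0 w w' hB
    calc |Vfn φ z τ w - Vfn φ z τ w'| ≤ τ * (ρ*th/(2*(T₀+1))) := h2
    _ ≤ ρ*th/2 := by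
        rw [mul_div_assoc', div_le_div_iff₀ (by linarith) (by norm_num)]
        nlinarith [mul_nonneg (mul_pos hρ hthpos).le (by linarith : (0:ℝ) ≤ T₀ + 1 - τ)]
  obtain ⟨r₁, hr₁def⟩ : ∃ r₁ : ℝ, r₁ = min γr (γ/4) := ⟨_, rfl⟩
  have hr₁pos : 0 < r₁ := by rw [hr₁def]; exact lt_min hγrpos (by linarith)
  have hr₁γr : r₁ ≤ γr := by rw [hr₁def]; exact min_le_left _ _
  have hr₁γ : r₁ ≤ γ/4 := by rw [hr₁def]; exact min_le_right _ _
  -- finite cover by small balls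
  obtain ⟨F2, hF2⟩ := isCompact_univ.elim_finite_subcover (fun z : X => Metric.ball z r₁)
    (fun z => Metric.isOpen_ball) (fun z _ => mem_iUnion.mpr ⟨z, Metric.mem_ball_self hr₁pos⟩)
  obtain ⟨zc, hzc⟩ : ∃ zc : Fin F2.card → X, zc = fun i => ((F2.equivFin.symm i) : X) :=
    ⟨_, rfl⟩
  have hcover : ∀ y : X, ∃ i : Fin F2.card, dist y (zc i) < r₁ := by
    intro y
    have h := hF2 (mem_univ y)
    rw [mem_iUnion₂] at h
    obtain ⟨z, hz, hyz⟩ := h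
    refine ⟨F2.equivFin ⟨z, hz⟩, ?_⟩
    rw [hzc]
    simp only [Equiv.symm_apply_apply]
    exact Metric.mem_ball.mp hyz
  choose τc hτc1 hτc2 hτc3 using fun i : Fin F2.card => hmot (zc i)
  obtain ⟨K, hKdef⟩ : ∃ K : Fin F2.card → Set X, K = fun i =>
      {w | dist w (zc i) ≤ γ/2 ∧ Vfn φ (zc i) (τc i) w = Vfn φ (zc i) (τc i) (zc i)} :=
    ⟨_, rfl⟩
  have hKmem : ∀ (i : Fin F2.card) (w : X), w ∈ K i ↔
      (dist w (zc i) ≤ γ/2 ∧ Vfn φ (zc i) (τc i) w = Vfn φ (zc i) (τc i) (zc i)) := by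
    intro i w
    rw [hKdef]
    exact Iff.rfl
  have hKclosed : ∀ i, IsClosed (K i) := by
    intro i
    rw [hKdef]
    simp only [setOf_and]
    exact IsClosed.inter (isClosed_le (continuous_id.dist continuous_const) continuous_const)
      (isClosed_eq (vfn_cont hφ _ (hτc1 i).le) continuous_const)
  have hKder : ∀ (i : Fin F2.card) (u : X), dist u (zc i) ≤ R →
      dist u (zc i) + ρ ≤ dist (φ (τc i) u) (zc i) :=
    fun i u hu => hder (zc i) u (τc i) (hτc1 i) (hτc2 i) (hτc3 i) hu
  -- crossing lemma
  have hcross : ∀ (i : Fin F2.card) (w : X), dist w (zc i) ≤ r₁ →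
      ∃ c : ℝ, |c| ≤ th ∧ φ c w ∈ K i := by
    intro i w hw
    have hVw : |Vfn φ (zc i) (τc i) w - Vfn φ (zc i) (τc i) (zc i)| ≤ ρ*th/2 :=
      hVdiff2 (zc i) (τc i) (hτc1 i).le (hτc2 i) w (zc i) (le_trans hw hr₁γr)
    have hVwa := abs_le.mp hVw
    have hseg : ∀ s ∈ Icc (-th) th, dist (φ s w) (zc i) ≤ R := by
      intro s hs
      have h1 : dist (φ s w) w < γ/4 := hmove2 w s (le_trans (abs_le.mpr ⟨hs.1, hs.2⟩) hths)
      have h2 := dist_triangle (φ s w) w (zc i)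
      linarith [hγR, hRpos, hr₁γ]
    have hm1 := vfn_mono hφ (hKder i) hthpos.le
      (fun s hs => hseg s ⟨by linarith [hs.1, hthpos], hs.2⟩)
      (y := w) (a := 0) (b := th)
    have hm2 := vfn_mono hφ (hKder i) (by linarith : -th ≤ (0:ℝ))
      (fun s hs => hseg s ⟨hs.1, by linarith [hs.2, hthpos]⟩)
      (y := w) (a := -th) (b := 0)
    rw [hφ.map_zero] at hm1 hm2
    have hcont : ContinuousOn (fun c : ℝ => Vfn φ (zc i) (τc i) (φ c w)) (Icc (-th) th) :=
      ((vfn_cont hφ _ (hτc1 i).le).comp (flow_cont_orbit hφ w)).continuousOn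
    have hLmem : Vfn φ (zc i) (τc i) (zc i) ∈
        Icc (Vfn φ (zc i) (τc i) (φ (-th) w)) (Vfn φ (zc i) (τc i) (φ th w)) := by
      constructor
      · nlinarith [hVwa.1, hVwa.2]
      · nlinarith [hVwa.1, hVwa.2]
    obtain ⟨c, hcmem, hVc⟩ := intermediate_value_Icc (by linarith : -th ≤ th) hcont hLmem
    refine ⟨c, abs_le.mpr ⟨hcmem.1, hcmem.2⟩, ?_⟩
    rw [hKmem]
    refine ⟨?_, hVc⟩
    have h1 : dist (φ c w) w < γ/4 :=
      hmove2 w c (le_trans (abs_le.mpr ⟨hcmem.1, hcmem.2⟩) hths)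
    have h2 := dist_triangle (φ c w) w (zc i)
    linarith [hr₁γ]
  -- hitting lemmas
  have hhit : ∀ y : X, ∃ (i : Fin F2.card) (Δ : ℝ), β ≤ Δ ∧ Δ ≤ 3*β ∧ φ Δ y ∈ K i := by
    intro y
    obtain ⟨i, hi⟩ := hcover (φ (2*β) y)
    obtain ⟨c, hc, hKc⟩ := hcross i (φ (2*β) y) hi.le
    have habs := abs_le.mp hc
    refine ⟨i, 2*β + c, by linarith only [habs.1, habs.2, hthβ, hβpos],
      by linarith only [habs.1, habs.2, hthβ, hβpos], ?_⟩
    have e : φ (2*β + c) y = φ c (φ (2*β) y) := by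
      rw [add_comm, hφ.map_add]
    rw [e]; exact hKc
  have hhit' : ∀ y : X, ∃ (i : Fin F2.card) (Δ : ℝ), β ≤ Δ ∧ Δ ≤ 3*β ∧ φ (-Δ) y ∈ K i := by
    intro y
    obtain ⟨i, hi⟩ := hcover (φ (-(2*β)) y)
    obtain ⟨c, hc, hKc⟩ := hcross i (φ (-(2*β)) y) hi.le
    have habs := abs_le.mp hc
    refine ⟨i, 2*β - c, by linarith only [habs.1, habs.2, hthβ, hβpos],
      by linarith only [habs.1, habs.2, hthβ, hβpos], ?_⟩
    have e : φ (-(2*β - c)) y = φ c (φ (-(2*β)) y) := by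
      rw [show -(2*β - c) = c + -(2*β) from by ring, hφ.map_add]
    rw [e]; exact hKc
  -- no-return
  have hnr : ∀ (i : Fin F2.card) (w : X) (c : ℝ), w ∈ K i → φ c w ∈ K i →
      0 < c → c ≤ 2*β → False := by
    intro i w c hw hc h0 h2
    rw [hKmem] at hw hc
    have hseg : ∀ s ∈ Icc (0:ℝ) c, dist (φ s w) (zc i) ≤ R := by
      intro s hs
      have h3 : dist (φ s w) w < R/2 := hmove w s
        (by rw [abs_of_nonneg hs.1]; linarith only [hs.2, h2])
      have h4 := dist_triangle (φ s w) w (zc i)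
      linarith only [h3, h4, hw.1, hγR, hRpos]
    have h5 := vfn_mono hφ (hKder i) h0.le hseg (y := w) (a := 0) (b := c)
    rw [hφ.map_zero, hw.2, hc.2] at h5
    have h6 : 0 < ρ * (c - 0) := by rw [sub_zero]; exact mul_pos hρ h0
    linarith only [h5, h6]
  -- hitting-time continuity
  have hhtc : ∀ (i j : Fin F2.card) (w w' : X) (Δ Δ' : ℝ), w ∈ K i → w' ∈ K i →
      φ Δ w ∈ K j → φ Δ' w' ∈ K j → β ≤ Δ → Δ ≤ 3*β → β ≤ Δ' → Δ' ≤ 3*β →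
      |Δ' - Δ| ≤ e₀ := by
    intro i j w w' Δ Δ' hw hw' hΔw hΔw' hΔ1 hΔ2 hΔ1' hΔ2'
    rw [hKmem] at hw hw' hΔw hΔw'
    have hww' : dist w w' ≤ γ := by
      have h := dist_triangle_right w w' (zc i)
      linarith only [h, hw.1, hw'.1]
    have h1 : dist (φ Δ w) (φ Δ w') < min (δ₀/2) (min γc (R/4)) :=
      hγprop w w' hww' Δ
        (by rw [abs_of_nonneg (by linarith only [hΔ1, hβpos])]; linarith only [hΔ2, hβ18])
    have h1c : dist (φ Δ w) (φ Δ w') ≤ γc :=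
      le_trans h1.le (le_trans (min_le_right _ _) (min_le_left _ _))
    have h1R : dist (φ Δ w) (φ Δ w') ≤ R/4 :=
      le_trans h1.le (le_trans (min_le_right _ _) (min_le_right _ _))
    have h2 : |Vfn φ (zc j) (τc j) (φ Δ w') - Vfn φ (zc j) (τc j) (zc j)| ≤ ρ*e₀/2 := by
      have h3 := hVdiff (zc j) (τc j) (hτc1 j).le (hτc2 j) (φ Δ w') (φ Δ w)
        (by rw [dist_comm]; exact h1c)
      rwa [hΔw.2] at h3
    have h2a := abs_le.mp h2
    have hdiffa : |Δ' - Δ| ≤ 2*β := by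
      rw [abs_le]; constructor <;> linarith only [hΔ1, hΔ2, hΔ1', hΔ2']
    have habs2 := abs_le.mp hdiffa
    have hseg : ∀ s ∈ Icc (min Δ Δ') (max Δ Δ'), dist (φ s w') (zc j) ≤ R := by
      intro s hs
      have hminb : Δ - 2*β ≤ min Δ Δ' := le_min (by linarith only [hβpos])
        (by linarith only [habs2.1])
      have hmaxb : max Δ Δ' ≤ Δ + 2*β := max_le (by linarith only [hβpos])
        (by linarith only [habs2.2])
      have h4 : |s - Δ| ≤ 2*β := by
        rw [abs_le]; constructor <;> linarith only [hs.1, hs.2, hminb, hmaxb]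
      have e : φ s w' = φ (s - Δ) (φ Δ w') := by rw [← hφ.map_add, sub_add_cancel]
      have h5 : dist (φ (s-Δ) (φ Δ w')) (φ Δ w') < R/2 := hmove _ _ h4
      rw [e]
      calc dist (φ (s-Δ) (φ Δ w')) (zc j)
          ≤ dist (φ (s-Δ) (φ Δ w')) (φ Δ w') + dist (φ Δ w') (zc j) := dist_triangle _ _ _
      _ ≤ R/2 + (dist (φ Δ w') (φ Δ w) + dist (φ Δ w) (zc j)) := by
          have h6 := dist_triangle (φ Δ w') (φ Δ w) (zc j)
          linarith only [h5, h6]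
      _ ≤ R/2 + (R/4 + γ/2) := by
          rw [dist_comm (φ Δ w') (φ Δ w)]
          linarith only [h1R, hΔw.1]
      _ ≤ R := by linarith only [hγR]
    rcases le_total Δ Δ' with h | h
    · have h7 := vfn_mono hφ (hKder j) h
        (fun s hs => hseg s (by rwa [min_eq_left h, max_eq_right h] at *)) (y := w')
        (a := Δ) (b := Δ')
      rw [hΔw'.2] at h7
      have h8 : ρ * (Δ' - Δ) ≤ ρ*e₀/2 := by linarith only [h7, h2a.1]
      have h9 : Δ' - Δ ≤ e₀/2 := by
        by_contra hcon
        push_neg at hcon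
        have h10 := mul_lt_mul_of_pos_left hcon hρ
        linarith only [h8, h10]
      rw [abs_of_nonneg (by linarith only [h])]
      linarith only [h9, he₀pos]
    · have h7 := vfn_mono hφ (hKder j) h
        (fun s hs => hseg s (by rwa [min_eq_right h, max_eq_left h] at *)) (y := w')
        (a := Δ') (b := Δ)
      rw [hΔw'.2] at h7
      have h8 : ρ * (Δ - Δ') ≤ ρ*e₀/2 := by linarith only [h7, h2a.2]
      have h9 : Δ - Δ' ≤ e₀/2 := by
        by_contra hcon
        push_neg at hcon
        have h10 := mul_lt_mul_of_pos_left hcon hρ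
        linarith only [h8, h10]
      rw [abs_of_nonpos (by linarith only [h])]
      linarith only [h9, he₀pos]
  -- diameter and closeness facts
  have hKdiam : ∀ i : Fin F2.card, ∀ w ∈ K i, ∀ w' ∈ K i, dist w w' ≤ γ := by
    intro i w hw w' hw'
    rw [hKmem] at hw hw'
    have h := dist_triangle_right w w' (zc i)
    linarith only [h, hw.1, hw'.1]
  have hγδ2 : ∀ (y y' : X), dist y y' ≤ γ → ∀ a : ℝ, |a| ≤ 1 →
      dist (φ a y) (φ a y') < δ₀/2 :=
    fun y y' h a ha => lt_of_lt_of_le (hγprop y y' h a ha) (min_le_left _ _)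
  -- uniqueness of witnesses
  have huniq : ∀ (q : ℤ → Fin F2.card) (x : X) (t : ℤ → ℝ) (x' : X) (t' : ℤ → ℝ),
      Wit φ β K q x t → Wit φ β K q x' t' → x = x' ∧ t = t' :=
    fun q x t x' t' hw hw' =>
      wit_unique hφ hβpos hβ18 hδ₀ hKdiam hγδ2 he₀ hhtc hnr hw hw'
  obtain ⟨Λ, f, p, h1, h2, h3, h4, h5, h6, h7⟩ :=
    assembly hφ hβpos hKclosed huniq hhit hhit'
  exact ⟨F2.card, Λ, f, p, h1, h2, h3, h4, h5, h6, h7⟩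
end

section
/- The set G ⋊ Σ^ℤ is closed in G × Σ^ℤ. -/
open Set Topology

variable {X : Type*}

/-- Bound on return times. -/
lemma retseq_bound {N : ℕ} {φ : ℝ → X → X} {S : Fin N → Set X} {β α : ℝ}
    {x : X} {q : ℤ → Fin N} {t : ℤ → ℝ} (ht : IsRetSeq φ S β α x q t)
    (hβ : 0 < β) (hβα : β ≤ α) (i : ℤ) : |t i| ≤ |(i : ℝ)| * α := by
  have hα : 0 < α := hβ.trans_le hβα
  have hpos : ∀ n : ℕ, 0 ≤ t n ∧ t n ≤ n * α := by
    intro n; induction n with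
    | zero => simp [ht.1]
    | succ n ih =>
      obtain ⟨h1, h2⟩ := ht.2.1 n
      push_cast
      constructor
      · nlinarith [ih.1]
      · nlinarith [ih.2]
  have hneg : ∀ n : ℕ, t (-n) ≤ 0 ∧ -(n * α) ≤ t (-n) := by
    intro n; induction n with
    | zero => simp [ht.1]
    | succ n ih =>
      obtain ⟨h1, h2⟩ := ht.2.1 (-(n + 1))
      have he : (-(↑n + 1) : ℤ) + 1 = -n := by ring
      rw [he] at h1 h2
      push_cast
      constructor
      · nlinarith [ih.1]
      · nlinarith [ih.2]
  rcases le_or_gt 0 i with h | h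
  · lift i to ℕ using h
    obtain ⟨h1, h2⟩ := hpos i
    rw [abs_of_nonneg h1]
    have : |((i : ℤ) : ℝ)| = (i : ℝ) := by
      push_cast; exact abs_of_nonneg (Nat.cast_nonneg i)
    rw [this]; push_cast; exact h2
  · obtain ⟨n, rfl⟩ : ∃ n : ℕ, i = -n := ⟨(-i).toNat, by omega⟩
    obtain ⟨h1, h2⟩ := hneg n
    rw [abs_of_nonpos h1]
    have : |((-(n : ℤ) : ℤ) : ℝ)| = (n : ℝ) := by
      push_cast; simp [abs_of_nonneg]
    rw [this]; linarith

/-- `G ⋊ Σ^ℤ` is closed in `G × Σ^ℤ` (equivalently, since `G` is closed, in `X × Σ^ℤ`). -/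
theorem isClosed_GJoin
    {X : Type*} [MetricSpace X] [CompactSpace X]
    (φ : ℝ → X → X) (hφ : IsFlow X φ)
    {N : ℕ} (S : Fin N → Set X) (η β α : ℝ)
    (hclosed : ∀ i, IsClosed (S i))
    (hdisj : Pairwise (Function.onFun Disjoint S))
    (hcs : ∀ i, IsCrossSection φ η (S i))
    (hβ : 0 < β) (hβα : β ≤ α) (hαη : α < η) :
    IsClosed (GJoin φ S β α) := by
  classical
  set B : Set (ℤ → ℝ) := Set.pi Set.univ (fun i => Icc (-(|(i : ℝ)| * α)) (|(i : ℝ)| * α)) with hB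
  set K : Set (X × (ℤ → Fin N) × (ℤ → ℝ)) :=
    {p | p.2.2 ∈ B ∧ IsRetSeq φ S β α p.1 p.2.1 p.2.2} with hKdef
  -- continuity helpers
  have ct : Continuous fun p : X × (ℤ → Fin N) × (ℤ → ℝ) => p.2.2 :=
    continuous_snd.comp continuous_snd
  have cti : ∀ i : ℤ, Continuous fun p : X × (ℤ → Fin N) × (ℤ → ℝ) => p.2.2 i :=
    fun i => (continuous_apply i).comp ct
  have cqi : ∀ i : ℤ, Continuous fun p : X × (ℤ → Fin N) × (ℤ → ℝ) => p.2.1 i :=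
    fun i => (continuous_apply i).comp (continuous_fst.comp continuous_snd)
  have cφ : ∀ i : ℤ, Continuous fun p : X × (ℤ → Fin N) × (ℤ → ℝ) => φ (p.2.2 i) p.1 :=
    fun i => hφ.cont.comp (continuous_fst.prodMk (cti i))
  have hKclosed : IsClosed K := by
    have hKeq : K = {p : X × (ℤ → Fin N) × (ℤ → ℝ) | p.2.2 ∈ B} ∩
        ({p | p.2.2 0 = 0} ∩
          ((⋂ i : ℤ, {p | β ≤ p.2.2 (i + 1) - p.2.2 i} ∩ {p | p.2.2 (i + 1) - p.2.2 i ≤ α}) ∩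
            ⋂ i : ℤ, {p | φ (p.2.2 i) p.1 ∈ S (p.2.1 i)})) := by
      ext p
      simp only [hKdef, IsRetSeq, Set.mem_setOf_eq, Set.mem_inter_iff, Set.mem_iInter,
        forall_and]
    rw [hKeq]
    refine ((isClosed_set_pi fun i _ => isClosed_Icc).preimage ct).inter
      ((isClosed_eq (cti 0) continuous_const).inter
        ((isClosed_iInter fun i => (isClosed_le continuous_const ((cti (i+1)).sub (cti i))).inter
          (isClosed_le ((cti (i+1)).sub (cti i)) continuous_const)).inter
          (isClosed_iInter fun i => ?_)))
    have : {p : X × (ℤ → Fin N) × (ℤ → ℝ) | φ (p.2.2 i) p.1 ∈ S (p.2.1 i)} =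
        ⋃ j : Fin N, ({p | p.2.1 i = j} ∩ {p | φ (p.2.2 i) p.1 ∈ S j}) := by
      ext p
      simp only [Set.mem_setOf_eq, Set.mem_iUnion, Set.mem_inter_iff]
      constructor
      · intro h; exact ⟨p.2.1 i, rfl, h⟩
      · rintro ⟨j, rfl, h⟩; exact h
    rw [this]
    exact isClosed_iUnion_of_finite fun j =>
      (isClosed_eq (cqi i) continuous_const).inter ((hclosed j).preimage (cφ i))
  have hBcomp : IsCompact B := isCompact_univ_pi fun i => isCompact_Icc
  have hKcomp : IsCompact K := by
    refine (((isCompact_univ (X := X)).prod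
      ((isCompact_univ (X := ℤ → Fin N)).prod hBcomp)).of_isClosed_subset hKclosed ?_)
    rintro ⟨x, q, t⟩ ⟨hmem, -⟩
    exact ⟨trivial, trivial, hmem⟩
  have himg : GJoin φ S β α =
      (fun p : X × (ℤ → Fin N) × (ℤ → ℝ) => (p.1, p.2.1)) '' K := by
    ext ⟨x, q⟩
    constructor
    · rintro ⟨hx, t, ht⟩
      refine ⟨(x, q, t), ⟨?_, ht⟩, rfl⟩
      intro i _
      exact abs_le.mp (retseq_bound ht hβ hβα i)
    · rintro ⟨⟨x', q', t⟩, ⟨hb, ht⟩, heq⟩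
      obtain ⟨h1, h2⟩ : x' = x ∧ q' = q := by
        simpa [Prod.ext_iff] using heq
      subst h1; subst h2
      refine ⟨?_, t, ht⟩
      have h0 := ht.2.2 0
      rw [ht.1, hφ.map_zero] at h0
      exact Set.mem_iUnion.mpr ⟨_, h0⟩
  rw [himg]
  exact (hKcomp.image (continuous_fst.prodMk (continuous_fst.comp continuous_snd))).isClosed
end

section
/- The map t : G ⋊ Σ^ℤ → ℝ^ℤ sending each (x,q) to its unique return-time sequence is continuous. -/
open Set Topology Filter

variable {X : Type*}

/-- The map sending `(x, q)` to its return-time sequence (junk value `0` outside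
`G ⋊ Σ^ℤ`; on `G ⋊ Σ^ℤ` the return-time sequence is unique, so `choose` picks it). -/
noncomputable def retSeqMap {N : ℕ} (φ : ℝ → X → X) (S : Fin N → Set X) (β α : ℝ)
    (p : X × (ℤ → Fin N)) : ℤ → ℝ :=
  @dite _ (∃ t : ℤ → ℝ, IsRetSeq φ S β α p.1 p.2 t) (Classical.dec _)
    (fun h => h.choose) (fun _ => 0)

/-- Two hits of the same cross-section within time `η` must coincide. -/
lemma sec_inj [TopologicalSpace X] {φ : ℝ → X → X} (hφ : IsFlow X φ) {η : ℝ} {S : Set X}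
    (hcs : IsCrossSection φ η S) {x : X} {s s' : ℝ}
    (hs : φ s x ∈ S) (hs' : φ s' x ∈ S) (hd : |s' - s| ≤ η) : s = s' := by
  obtain ⟨hd1, hd2⟩ := abs_le.mp hd
  have h1 : ((φ s x, s' - s) : X × ℝ) ∈ S ×ˢ Set.Icc (-η) η := ⟨hs, hd1, hd2⟩
  have h2 : ((φ s' x, (0:ℝ)) : X × ℝ) ∈ S ×ˢ Set.Icc (-η) η :=
    ⟨hs', by constructor <;> simp <;> linarith [hcs.1]⟩
  have heq : φ (s' - s) (φ s x) = φ 0 (φ s' x) := by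
    rw [← hφ.map_add, hφ.map_zero, sub_add_cancel]
  have := hcs.2 h1 h2 heq
  have h0 : s' - s = (0:ℝ) := congrArg Prod.snd this
  linarith

/-- The map `t : G ⋊ Σ^ℤ → ℝ^ℤ` sending each `(x,q)` to its unique return-time sequence
is continuous. -/
theorem continuousOn_retSeqMap
    {X : Type*} [MetricSpace X] [CompactSpace X]
    (φ : ℝ → X → X) (hφ : IsFlow X φ)
    {N : ℕ} (S : Fin N → Set X) (η β α : ℝ)
    (hclosed : ∀ i, IsClosed (S i))
    (hdisj : Pairwise (Function.onFun Disjoint S))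
    (hcs : ∀ i, IsCrossSection φ η (S i))
    (hβ : 0 < β) (hβα : β ≤ α) (hαη : α < η)
    (huniq : ∀ p ∈ GJoin φ S β α, ∃! t : ℤ → ℝ, IsRetSeq φ S β α p.1 p.2 t) :
    ContinuousOn (retSeqMap φ S β α) (GJoin φ S β α) := by
  set T := retSeqMap φ S β α with hTdef
  have key : ∀ p ∈ GJoin φ S β α, IsRetSeq φ S β α p.1 p.2 (T p) := by
    intro p hp
    obtain ⟨-, ht⟩ := hp
    rw [hTdef, retSeqMap, dif_pos ht]
    exact ht.choose_spec
  intro p hp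
  apply tendsto_iff_seq_tendsto.mpr
  intro u hu
  rw [tendsto_nhdsWithin_iff] at hu
  obtain ⟨hup, humem⟩ := hu
  rw [tendsto_pi_nhds]
  intro i
  show Tendsto (fun n => T (u n) i) atTop (𝓝 (T p i))
  have hx : Tendsto (fun n => (u n).1) atTop (𝓝 p.1) := (continuous_fst.tendsto p).comp hup
  have hrn : ∀ᶠ n in atTop, IsRetSeq φ S β α (u n).1 (u n).2 (T (u n)) :=
    humem.mono fun n hn => key _ hn
  have hrp : IsRetSeq φ S β α p.1 p.2 (T p) := key p hp
  have hq : ∀ j : ℤ, ∀ᶠ n in atTop, (u n).2 j = p.2 j := by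
    intro j
    have h1 : Tendsto (fun n => (u n).2 j) atTop (𝓝 (p.2 j)) :=
      ((continuous_apply j).tendsto p.2).comp ((continuous_snd.tendsto p).comp hup)
    rwa [nhds_discrete, tendsto_pure] at h1
  have step : ∀ (i j : ℤ) (σ : ℝ), |σ| = 1 →
      (∀ (x : X) (q : ℤ → Fin N) (t : ℤ → ℝ), IsRetSeq φ S β α x q t →
        σ * (t j - t i) ∈ Set.Icc β α) →
      Tendsto (fun n => T (u n) i) atTop (𝓝 (T p i)) →
      Tendsto (fun n => T (u n) j) atTop (𝓝 (T p j)) := by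
    intro i j σ hσ hg hi
    set L := T p j with hLdef
    have hgn : ∀ᶠ n in atTop, σ * (T (u n) j - T (u n) i) ∈ Set.Icc β α :=
      hrn.mono fun n hn => hg _ _ _ hn
    have hgp : σ * (L - T p i) ∈ Set.Icc β α := hg _ _ _ hrp
    have hmemn : ∀ᶠ n in atTop, φ (T (u n) j) (u n).1 ∈ S (p.2 j) := by
      filter_upwards [hrn, hq j] with n hn hqn
      rw [← hqn]; exact hn.2.2 j
    have hbound : ∀ᶠ n in atTop,
        T (u n) j ∈ Set.Icc (T p i - α - 1) (T p i + α + 1) := by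
      have hi1 : ∀ᶠ n in atTop, T (u n) i ∈ Metric.ball (T p i) 1 :=
        hi.eventually (Metric.ball_mem_nhds (T p i) one_pos)
      filter_upwards [hgn, hi1] with n h1 h2
      have habs : |T (u n) j - T (u n) i| ≤ α := by
        have h3 : |σ * (T (u n) j - T (u n) i)| ≤ α := by
          rw [abs_of_nonneg (le_trans hβ.le h1.1)]; exact h1.2
        rwa [abs_mul, hσ, one_mul] at h3
      have hdist : |T (u n) i - T p i| < 1 := by
        simpa [Real.dist_eq] using h2
      obtain ⟨hl, hr⟩ := abs_le.mp habs
      obtain ⟨h3, h4⟩ := abs_lt.mp hdist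
      constructor <;> linarith
    apply tendsto_of_subseq_tendsto
    intro ns hns
    obtain ⟨a, -, ms, hms, hma⟩ :=
      (isCompact_Icc (a := T p i - α - 1) (b := T p i + α + 1)).tendsto_subseq'
        ((hns.eventually hbound).frequently)
    refine ⟨ms, ?_⟩
    set m : ℕ → ℕ := ns ∘ ms with hmdef
    have hm : Tendsto m atTop atTop := hns.comp hms.tendsto_atTop
    have hva : Tendsto (fun n => T (u (m n)) j) atTop (𝓝 a) := hma
    have hxa : Tendsto (fun n => (u (m n)).1) atTop (𝓝 p.1) := hx.comp hm
    have hia : Tendsto (fun n => T (u (m n)) i) atTop (𝓝 (T p i)) := hi.comp hm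
    have hgap_a : σ * (a - T p i) ∈ Set.Icc β α := by
      have ht : Tendsto (fun n => σ * (T (u (m n)) j - T (u (m n)) i)) atTop
          (𝓝 (σ * (a - T p i))) := (hva.sub hia).const_mul σ
      exact isClosed_Icc.mem_of_tendsto ht (hm.eventually hgn)
    have hmem_a : φ a p.1 ∈ S (p.2 j) := by
      have hc : Tendsto (fun n => φ (T (u (m n)) j) (u (m n)).1) atTop (𝓝 (φ a p.1)) :=
        (hφ.cont.tendsto (p.1, a)).comp (hxa.prodMk_nhds hva)
      exact (hclosed (p.2 j)).mem_of_tendsto hc (hm.eventually hmemn)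
    have hmem_L : φ L p.1 ∈ S (p.2 j) := hrp.2.2 j
    have haL : a = L := by
      apply sec_inj hφ (hcs (p.2 j)) hmem_a hmem_L
      have e : σ * (L - a) = σ * (L - T p i) - σ * (a - T p i) := by ring
      have h1 : |σ * (L - a)| ≤ α - β := by
        rw [e]
        apply abs_le.mpr
        constructor <;> linarith [hgap_a.1, hgap_a.2, hgp.1, hgp.2]
      rw [abs_mul, hσ, one_mul] at h1
      linarith
    rw [haL] at hva
    exact hva
  induction i using Int.induction_on with
  | zero =>
    rw [hrp.1]
    apply Tendsto.congr' _ tendsto_const_nhds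
    filter_upwards [hrn] with n hn
    exact hn.1.symm
  | succ k ih =>
    apply step k (k + 1) 1 (by norm_num) _ ih
    intro x q t ht
    obtain ⟨h1, h2⟩ := ht.2.1 k
    constructor <;> simp <;> linarith
  | pred k ih =>
    apply step (-k) (-k - 1) (-1) (by norm_num) _ ih
    intro x q t ht
    have h2 := ht.2.1 (-k - 1)
    have e : (-(k:ℤ) - 1) + 1 = -k := by ring
    rw [e] at h2
    constructor <;> simp <;> linarith [h2.1, h2.2]
end

section
/- The projection P_2 : G ⋊ Σ^ℤ → Σ^ℤ defined by (x,q) ↦ q is injective. -/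
open Set Topology

variable {X : Type*}

/-- The projection `P₂ : G ⋊ Σ^ℤ → Σ^ℤ`, `(x,q) ↦ q`, is injective. -/
theorem proj_snd_injOn_GJoin
    {X : Type*} [MetricSpace X] [CompactSpace X]
    (φ : ℝ → X → X) (hφ : IsFlow X φ)
    {N : ℕ} (S : Fin N → Set X) (η β α : ℝ)
    (hclosed : ∀ i, IsClosed (S i))
    (hdisj : Pairwise (Function.onFun Disjoint S))
    (hcs : ∀ i, IsCrossSection φ η (S i))
    (hβ : 0 < β) (hβα : β ≤ α) (hαη : α < η)
    (hdiam : ∀ i, Metric.diam (S i) ≤ α)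
    (hα : ∀ (t u : ℤ → ℝ) (x y : X), t 0 = 0 → u 0 = 0 →
      (∀ i : ℤ, 0 < t (i + 1) - t i ∧ t (i + 1) - t i ≤ α) →
      (∀ i : ℤ, |u (i + 1) - u i| ≤ α) →
      Filter.Tendsto (fun n : ℕ => t (n : ℤ)) Filter.atTop Filter.atTop →
      Filter.Tendsto (fun n : ℕ => t (-(n : ℤ))) Filter.atTop Filter.atBot →
      (∀ i : ℤ, dist (φ (t i) x) (φ (u i) y) ≤ α) →
      ∃ s : ℝ, |s| ≤ η ∧ y = φ s x) :
    ∀ (x y : X) (q : ℤ → Fin N),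
      (x, q) ∈ GJoin φ S β α → (y, q) ∈ GJoin φ S β α → x = y := by
  rintro x y q ⟨-, t, ht0, htinc, htmem⟩ ⟨-, u, hu0, huinc, humem⟩
  have hgrow : ∀ n : ℕ, (n : ℝ) * β ≤ t (n : ℤ) := by
    intro n
    induction n with
    | zero => simp [ht0]
    | succ n ih =>
      have h := (htinc (n : ℤ)).1
      push_cast
      push_cast at ih
      linarith
  have hgrow' : ∀ n : ℕ, t (-(n : ℤ)) ≤ -((n : ℝ) * β) := by
    intro n
    induction n with
    | zero => simp [ht0]
    | succ n ih =>
      have h := (htinc (-((n:ℤ)+1))).1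
      have he : (-((n:ℤ)+1)) + 1 = -(n:ℤ) := by ring
      rw [he] at h
      have hc : ((n+1 : ℕ) : ℤ) = (n:ℤ)+1 := by push_cast; ring
      rw [hc]
      push_cast
      linarith
  have hT : Filter.Tendsto (fun n : ℕ => t (n : ℤ)) Filter.atTop Filter.atTop := by
    refine Filter.tendsto_atTop_mono hgrow ?_
    exact (tendsto_natCast_atTop_atTop (R := ℝ)).atTop_mul_const hβ
  have hB : Filter.Tendsto (fun n : ℕ => t (-(n : ℤ))) Filter.atTop Filter.atBot := by
    refine Filter.tendsto_atBot_mono hgrow' ?_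
    exact Filter.tendsto_neg_atTop_atBot.comp
      ((tendsto_natCast_atTop_atTop (R := ℝ)).atTop_mul_const hβ)
  have hdist : ∀ i : ℤ, dist (φ (t i) x) (φ (u i) y) ≤ α := by
    intro i
    refine le_trans ?_ (hdiam (q i))
    exact Metric.dist_le_diam_of_mem ((hclosed (q i)).isCompact.isBounded)
      (htmem i) (humem i)
  obtain ⟨s, hs, hy⟩ := hα t u x y ht0 hu0
    (fun i => ⟨lt_of_lt_of_le hβ (htinc i).1, (htinc i).2⟩)
    (fun i => abs_le.mpr ⟨by linarith [(huinc i).1], (huinc i).2⟩)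
    hT hB hdist
  have hη : 0 < η := (hcs (q 0)).1
  have hx0 : x ∈ S (q 0) := by
    have := htmem 0; rwa [ht0, hφ.map_zero] at this
  have hy0 : y ∈ S (q 0) := by
    have := humem 0; rwa [hu0, hφ.map_zero] at this
  have hval : (fun p : X × ℝ => φ p.2 p.1) (x, s) = (fun p : X × ℝ => φ p.2 p.1) (y, 0) := by
    simp only
    rw [hφ.map_zero, ← hy]
  have heq := (hcs (q 0)).2 (Set.mk_mem_prod hx0 (abs_le.mp hs))
    (Set.mk_mem_prod hy0 ⟨by linarith, le_of_lt hη⟩) hval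
  exact congrArg Prod.fst heq
end
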